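/- arXiv:2007.07520 — 2 statements merged into one kernel-verified Lean document; each statement's English description precedes it below -/
import Mathlib

section
/- Let Γ be a finite simple graph whose line graph L(Γ) is a Neumaier graph. Then one of the following holds: (1) there is a positive integer s such that L(Γ) is isomorphic to the line graph of the complete bipartite graph K_{s+1,s+1} (the (s+1)×(s+1) rook graph); (2) there is an integer s ≥ 2 such that L(Γ) is isomorphic to the line graph of the complete graph K_{s+2} (the Johnson graph J(s+2,2)); (3) L(Γ) is isomorphic to the complete tripartite graph K_{2,2,2} (the octahedral graph). In particular, L(Γ) is a strongly regular graph. -/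
open scoped Classical
open Matrix

variable {V : Type*}

/-- `G` is edge-regular with parameters `(v, k, l)`: it has `v` vertices, every vertex has
degree `k`, and every pair of adjacent vertices has exactly `l` common neighbours. -/
def IsEdgeRegular [Fintype V] (G : SimpleGraph V) (v k l : ℕ) : Prop :=
  Fintype.card V = v ∧ G.IsRegularOfDegree k ∧
    ∀ x y : V, G.Adj x y → Fintype.card (G.commonNeighbors x y) = l

/-- `C` is an `e`-regular clique of `G` (for `e > 0`): a clique such that every vertex
outside `C` is adjacent to exactly `e` vertices of `C`. -/
def IsRegularCliqueWith [Fintype V] (G : SimpleGraph V) (C : Finset V) (e : ℕ) : Prop :=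
  G.IsClique ↑C ∧ 0 < e ∧ ∀ x : V, x ∉ C → (C.filter (fun y => G.Adj x y)).card = e

/-- A Neumaier graph: a non-complete edge-regular graph containing a regular clique. -/
def IsNeumaier [Fintype V] (G : SimpleGraph V) : Prop :=
  (∃ v k l : ℕ, IsEdgeRegular G v k l) ∧ G ≠ ⊤ ∧ ∃ (C : Finset V) (e : ℕ), IsRegularCliqueWith G C e

/-- A graph is complete multipartite when non-adjacency (together with equality) is
a transitive relation on the vertices. -/
def IsCompleteMultipartite (G : SimpleGraph V) : Prop :=
  ∀ x y z : V, ¬G.Adj x y → ¬G.Adj y z → ¬G.Adj x z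

/-- `θ` is a (real) eigenvalue of the adjacency matrix of `G`. -/
def IsAdjEigenvalue [Fintype V] (G : SimpleGraph V) (θ : ℝ) : Prop :=
  ∃ f : V → ℝ, f ≠ 0 ∧ G.adjMatrix ℝ *ᵥ f = θ • f

/-- The average, over all edges of `G`, of the number of common neighbours of the
two endpoints of the edge. -/
noncomputable def avgLambda [Fintype V] (G : SimpleGraph V) : ℝ :=
  (∑ ed ∈ G.edgeFinset, Sym2.lift
      ⟨fun x y => ((G.commonNeighbors x y).ncard : ℝ),
       fun x y => by dsimp only; rw [SimpleGraph.commonNeighbors_symm]⟩ ed) / (G.edgeFinset.card : ℝ)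

namespace Stmt17Aux

open SimpleGraph

lemma edgeSet_ext_iff {G : SimpleGraph V} {x y : G.edgeSet} : x = y ↔ (x : Sym2 V) = y :=
  Subtype.ext_iff

lemma card_edgeSubset [Fintype V] {G : SimpleGraph V} (s : Set G.edgeSet) [Fintype s]
    (T : Finset (Sym2 V))
    (h : ∀ w : Sym2 V, w ∈ T ↔ ∃ hw : w ∈ G.edgeSet, (⟨w, hw⟩ : G.edgeSet) ∈ s) :
    Fintype.card s = T.card := by
  classical
  have e1 := Equiv.subtypeSubtypeEquivSubtypeExists (· ∈ G.edgeSet) (· ∈ s)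
  rw [Fintype.card_congr e1, Fintype.card_congr (Equiv.subtypeEquivRight (fun w => (h w).symm))]
  exact Fintype.card_coe T

lemma edge_rep {G : SimpleGraph V} (ε : G.edgeSet) :
    ∃ (a b : V) (hab : G.Adj a b), ε = ⟨s(a, b), hab⟩ := by
  obtain ⟨w, hw⟩ := ε
  induction w with
  | _ a b => exact ⟨a, b, hw, rfl⟩

lemma lineGraph_adj' {G : SimpleGraph V} {a b c d : V} (hab : G.Adj a b) (hcd : G.Adj c d) :
    G.lineGraph.Adj ⟨s(a,b), hab⟩ ⟨s(c,d), hcd⟩ ↔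
      s(a,b) ≠ s(c,d) ∧ (a = c ∨ a = d ∨ b = c ∨ b = d) := by
  rw [lineGraph_adj_iff_exists]
  simp only [ne_eq, edgeSet_ext_iff, Sym2.mem_iff]
  constructor
  · rintro ⟨h1, v, (rfl|rfl), (rfl|rfl)⟩ <;> tauto
  · rintro ⟨h1, (rfl|rfl|rfl|rfl)⟩
    exacts [⟨h1, a, by tauto⟩, ⟨h1, a, by tauto⟩, ⟨h1, b, by tauto⟩, ⟨h1, b, by tauto⟩]

lemma mem_star_image [Fintype V] {G : SimpleGraph V} {a : V} {w : Sym2 V} :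
    w ∈ (G.neighborFinset a).image (fun t => s(a, t)) ↔ w ∈ G.edgeSet ∧ a ∈ w := by
  classical
  constructor
  · rintro hw
    simp only [Finset.mem_image, mem_neighborFinset] at hw
    obtain ⟨t, ht, rfl⟩ := hw
    exact ⟨ht, Sym2.mem_mk_left a t⟩
  · rintro ⟨hw, haw⟩
    induction w with
    | _ x y =>
      simp only [Finset.mem_image, mem_neighborFinset]
      rw [Sym2.mem_iff] at haw
      rw [mem_edgeSet] at hw
      rcases haw with rfl | rfl
      · exact ⟨y, hw, rfl⟩
      · exact ⟨x, hw.symm, Sym2.eq_swap⟩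

lemma lineGraph_degree [Fintype V] {G : SimpleGraph V} {a b : V} (hab : G.Adj a b) :
    G.lineGraph.degree ⟨s(a, b), hab⟩ + 2 = G.degree a + G.degree b := by
  classical
  set A := (G.neighborFinset a).image (fun w => s(a,w)) with hA
  set B := (G.neighborFinset b).image (fun w => s(b,w)) with hB
  rw [← card_neighborSet_eq_degree]
  rw [card_edgeSubset (G.lineGraph.neighborSet ⟨s(a, b), hab⟩) ((A ∪ B).erase s(a,b)) ?_]
  · have hinj : Function.Injective (fun w => s(a,w) : V → Sym2 V) := fun x y h => by
      rwa [Sym2.congr_right] at h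
    have hinj' : Function.Injective (fun w => s(b,w) : V → Sym2 V) := fun x y h => by
      rwa [Sym2.congr_right] at h
    have hAcard : A.card = G.degree a := by
      rw [hA, Finset.card_image_of_injective _ hinj, card_neighborFinset_eq_degree]
    have hBcard : B.card = G.degree b := by
      rw [hB, Finset.card_image_of_injective _ hinj', card_neighborFinset_eq_degree]
    have hinter : A ∩ B = {s(a,b)} := by
      ext w
      simp only [Finset.mem_inter, Finset.mem_singleton, hA, hB, mem_star_image]
      constructor
      · rintro ⟨⟨hw, haw⟩, ⟨-, hbw⟩⟩
        exact ((Sym2.mem_and_mem_iff hab.ne).mp ⟨haw, hbw⟩)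
      · rintro rfl
        exact ⟨⟨hab, Sym2.mem_mk_left a b⟩, ⟨hab, Sym2.mem_mk_right a b⟩⟩
    have hmem : s(a,b) ∈ A ∪ B := by
      rw [Finset.mem_union, hA, mem_star_image]
      exact Or.inl ⟨hab, Sym2.mem_mk_left a b⟩
    have h1 := Finset.card_union_add_card_inter A B
    rw [hinter, Finset.card_singleton] at h1
    rw [Finset.card_erase_of_mem hmem]
    have h2 : 1 ≤ (A ∪ B).card := Finset.card_pos.mpr ⟨_, hmem⟩
    omega
  · intro w
    simp only [Finset.mem_erase, Finset.mem_union, hA, hB, mem_star_image,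
      mem_neighborSet, lineGraph_adj_iff_exists, ne_eq, edgeSet_ext_iff, Sym2.mem_iff]
    constructor
    · rintro ⟨hne, (⟨hw, haw⟩ | ⟨hw, hbw⟩)⟩
      · exact ⟨hw, fun h => hne h.symm, a, Or.inl rfl, haw⟩
      · exact ⟨hw, fun h => hne h.symm, b, Or.inr rfl, hbw⟩
    · rintro ⟨hw, hne, v, (rfl | rfl), hvw⟩
      · exact ⟨fun h => hne h.symm, Or.inl ⟨hw, hvw⟩⟩
      · exact ⟨fun h => hne h.symm, Or.inr ⟨hw, hvw⟩⟩

lemma lineGraph_common_adj [Fintype V] {G : SimpleGraph V} {a b c : V}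
    (hab : G.Adj a b) (hac : G.Adj a c) (hbc : b ≠ c) :
    Fintype.card (G.lineGraph.commonNeighbors ⟨s(a,b), hab⟩ ⟨s(a,c), hac⟩) + 2
      = G.degree a + (if G.Adj b c then 1 else 0) := by
  classical
  set T : Finset (Sym2 V) :=
    ((((G.neighborFinset a).image (fun w => s(a,w))).erase s(a,b)).erase s(a,c)) ∪
      (if G.Adj b c then {s(b,c)} else ∅) with hT
  rw [card_edgeSubset _ T ?_]
  · have hinj : Function.Injective (fun w => s(a,w) : V → Sym2 V) := fun x y h => by
      rwa [Sym2.congr_right] at h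
    have hmem1 : s(a,b) ∈ (G.neighborFinset a).image (fun w => s(a,w)) :=
      mem_star_image.mpr ⟨hab, Sym2.mem_mk_left a b⟩
    have hmem2 : s(a,c) ∈ ((G.neighborFinset a).image (fun w => s(a,w))).erase s(a,b) := by
      refine Finset.mem_erase.mpr ⟨?_, mem_star_image.mpr ⟨hac, Sym2.mem_mk_left a c⟩⟩
      rw [ne_eq, Sym2.congr_right]
      exact fun h => hbc h.symm
    have hdisj : Disjoint ((((G.neighborFinset a).image (fun w => s(a,w))).erase s(a,b)).erase
        s(a,c)) (if G.Adj b c then {s(b,c)} else (∅ : Finset (Sym2 V))) := by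
      rw [Finset.disjoint_right]
      intro w hw hw'
      split_ifs at hw with h
      · rw [Finset.mem_singleton] at hw
        subst hw
        have := (mem_star_image.mp (Finset.mem_of_mem_erase (Finset.mem_of_mem_erase hw'))).2
        rw [Sym2.mem_iff] at this
        rcases this with rfl | rfl
        · exact hab.ne rfl
        · exact hac.ne rfl
      · exact absurd hw (Finset.notMem_empty w)
    have hdeg : 2 ≤ G.degree a := by
      have hsub : ({b, c} : Finset V) ⊆ G.neighborFinset a := by
        intro t ht
        rcases Finset.mem_insert.mp ht with rfl | ht
        · exact (mem_neighborFinset _ _ _).mpr hab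
        · rw [Finset.mem_singleton] at ht; subst ht
          exact (mem_neighborFinset _ _ _).mpr hac
      have h2 : ({b, c} : Finset V).card = 2 := by
        rw [Finset.card_insert_of_notMem (by simp [hbc]), Finset.card_singleton]
      rw [← card_neighborFinset_eq_degree, ← h2]
      exact Finset.card_le_card hsub
    rw [hT, Finset.card_union_of_disjoint hdisj, Finset.card_erase_of_mem hmem2,
      Finset.card_erase_of_mem hmem1,
      Finset.card_image_of_injective _ hinj, card_neighborFinset_eq_degree]
    split_ifs with h
    · rw [Finset.card_singleton]; omega
    · rw [Finset.card_empty]; omega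
  · intro w
    simp only [hT, Finset.mem_union, Finset.mem_erase, mem_star_image, ne_eq,
      mem_commonNeighbors, lineGraph_adj_iff_exists, edgeSet_ext_iff, Sym2.mem_iff]
    constructor
    · rintro (⟨hwc, hwb, hw, haw⟩ | hw)
      · exact ⟨hw, ⟨fun h => hwb h.symm, a, Or.inl rfl, haw⟩,
          ⟨fun h => hwc h.symm, a, Or.inl rfl, haw⟩⟩
      · split_ifs at hw with h
        · rw [Finset.mem_singleton] at hw
          subst hw
          refine ⟨h, ⟨?_, b, Or.inr rfl, Sym2.mem_mk_left b c⟩,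
            ⟨?_, c, Or.inr rfl, Sym2.mem_mk_right b c⟩⟩
          · rw [Sym2.eq_iff]
            rintro (⟨h1, h2⟩ | ⟨h1, h2⟩)
            · exact hab.ne h1
            · exact hac.ne h1
          · rw [Sym2.eq_iff]
            rintro (⟨h1, h2⟩ | ⟨h1, h2⟩)
            · exact hab.ne h1
            · exact hbc h2.symm
        · exact absurd hw (Finset.notMem_empty w)
    · rintro ⟨hw, ⟨hne1, v1, hv1, hv1w⟩, ⟨hne2, v2, hv2, hv2w⟩⟩
      by_cases haw : a ∈ w
      · exact Or.inl ⟨fun h => hne2 h.symm, fun h => hne1 h.symm, hw, haw⟩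
      · have hbw : b ∈ w := by
          rcases hv1 with rfl | rfl
          · exact absurd hv1w haw
          · exact hv1w
        have hcw : c ∈ w := by
          rcases hv2 with rfl | rfl
          · exact absurd hv2w haw
          · exact hv2w
        have hwbc : w = s(b,c) := (Sym2.mem_and_mem_iff hbc).mp ⟨hbw, hcw⟩
        have hadjbc : G.Adj b c := by rw [← mem_edgeSet, ← hwbc]; exact hw
        rw [if_pos hadjbc]
        exact Or.inr (Finset.mem_singleton.mpr hwbc)

lemma lineGraph_common_nonadj [Fintype V] {G : SimpleGraph V} {a b c d : V}
    (hab : G.Adj a b) (hcd : G.Adj c d)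
    (h1 : a ≠ c) (h2 : a ≠ d) (h3 : b ≠ c) (h4 : b ≠ d) :
    Fintype.card (G.lineGraph.commonNeighbors ⟨s(a,b), hab⟩ ⟨s(c,d), hcd⟩)
      = (({s(a,c), s(a,d), s(b,c), s(b,d)} : Finset (Sym2 V)).filter
          (fun w => w ∈ G.edgeSet)).card := by
  classical
  rw [card_edgeSubset _ _ ?_]
  intro w
  simp only [Finset.mem_filter, Finset.mem_insert, Finset.mem_singleton,
    mem_commonNeighbors, lineGraph_adj_iff_exists, ne_eq, edgeSet_ext_iff]
  constructor
  · rintro ⟨(rfl | rfl | rfl | rfl), hw⟩ <;>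
      refine ⟨hw, ⟨by simp [Sym2.eq_iff, h1, h2, h3, h4, h1.symm, h2.symm, h3.symm, h4.symm,
          hab.ne, hab.ne', hcd.ne, hcd.ne'], ?_⟩,
        ⟨by simp [Sym2.eq_iff, h1, h2, h3, h4, h1.symm, h2.symm, h3.symm, h4.symm,
          hab.ne, hab.ne', hcd.ne, hcd.ne'], ?_⟩⟩
    exacts [⟨a, by simp, by simp⟩, ⟨c, by simp, by simp⟩,
      ⟨a, by simp, by simp⟩, ⟨d, by simp, by simp⟩,
      ⟨b, by simp, by simp⟩, ⟨c, by simp, by simp⟩,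
      ⟨b, by simp, by simp⟩, ⟨d, by simp, by simp⟩]
  · rintro ⟨hw, ⟨-, v1, hv1, hv1w⟩, ⟨-, v2, hv2, hv2w⟩⟩
    rw [Sym2.mem_iff] at hv1 hv2
    have hv12 : v1 ≠ v2 := by
      rcases hv1 with rfl | rfl <;> rcases hv2 with rfl | rfl <;> assumption
    have hwv : w = s(v1, v2) := (Sym2.mem_and_mem_iff hv12).mp ⟨hv1w, hv2w⟩
    subst hwv
    refine ⟨?_, hw⟩
    rcases hv1 with rfl | rfl <;> rcases hv2 with rfl | rfl <;> tauto

lemma not_adj_reps {G : SimpleGraph V} (ε₁ ε₂ : G.edgeSet) (hne : ε₁ ≠ ε₂)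
    (hnadj : ¬ G.lineGraph.Adj ε₁ ε₂) :
    ∃ (a b c d : V) (hab : G.Adj a b) (hcd : G.Adj c d),
      ε₁ = ⟨s(a,b), hab⟩ ∧ ε₂ = ⟨s(c,d), hcd⟩ ∧ a ≠ c ∧ a ≠ d ∧ b ≠ c ∧ b ≠ d := by
  obtain ⟨a, b, hab, rfl⟩ := edge_rep ε₁
  obtain ⟨c, d, hcd, rfl⟩ := edge_rep ε₂
  rw [lineGraph_adj_iff_exists] at hnadj
  push_neg at hnadj
  have hsh := hnadj hne
  refine ⟨a, b, c, d, hab, hcd, rfl, rfl, ?_, ?_, ?_, ?_⟩ <;> rintro rfl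
  · exact hsh a (Sym2.mem_mk_left _ _) (Sym2.mem_mk_left _ _)
  · exact hsh a (Sym2.mem_mk_left _ _) (Sym2.mem_mk_right _ _)
  · exact hsh b (Sym2.mem_mk_right _ _) (Sym2.mem_mk_left _ _)
  · exact hsh b (Sym2.mem_mk_right _ _) (Sym2.mem_mk_right _ _)

lemma exists_disjoint_edges {G : SimpleGraph V} (h : G.lineGraph ≠ ⊤) :
    ∃ a b c d : V, G.Adj a b ∧ G.Adj c d ∧ a ≠ c ∧ a ≠ d ∧ b ≠ c ∧ b ≠ d := by
  have hex : ∃ ε₁ ε₂ : G.edgeSet, ε₁ ≠ ε₂ ∧ ¬ G.lineGraph.Adj ε₁ ε₂ := by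
    by_contra hc
    push_neg at hc
    apply h
    ext ε₁ ε₂
    rw [top_adj]
    exact ⟨fun ha => ha.ne, fun hne => hc ε₁ ε₂ hne⟩
  obtain ⟨ε₁, ε₂, hne, hnadj⟩ := hex
  obtain ⟨a, b, c, d, hab, hcd, -, -, h1, h2, h3, h4⟩ := not_adj_reps ε₁ ε₂ hne hnadj
  exact ⟨a, b, c, d, hab, hcd, h1, h2, h3, h4⟩

lemma rep_of_mem {G : SimpleGraph V} (ε : G.edgeSet) {u : V} (hu : u ∈ (ε : Sym2 V)) :
    ∃ p, G.Adj u p ∧ (ε : Sym2 V) = s(u, p) := by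
  obtain ⟨a, b, hab, rfl⟩ := edge_rep ε
  rw [Sym2.mem_iff] at hu
  rcases hu with rfl | rfl
  · exact ⟨b, hab, rfl⟩
  · exact ⟨a, hab.symm, Sym2.eq_swap⟩

lemma two_le_degree [Fintype V] {G : SimpleGraph V} {u p q : V}
    (hp : G.Adj u p) (hq : G.Adj u q) (h : p ≠ q) : 2 ≤ G.degree u := by
  rw [← card_neighborFinset_eq_degree]
  exact Finset.one_lt_card.mpr ⟨p, (mem_neighborFinset _ _ _).mpr hp, q,
    (mem_neighborFinset _ _ _).mpr hq, h⟩

lemma F1 [Fintype V] {G : SimpleGraph V} {k : ℕ}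
    (hreg : G.lineGraph.IsRegularOfDegree k) {a b : V} (hab : G.Adj a b) :
    G.degree a + G.degree b = k + 2 := by
  have h1 := lineGraph_degree hab
  have h2 := hreg ⟨s(a,b), hab⟩
  omega

lemma F2 [Fintype V] {G : SimpleGraph V} {lam : ℕ}
    (hlam : ∀ ε₁ ε₂ : G.edgeSet, G.lineGraph.Adj ε₁ ε₂ →
      Fintype.card (G.lineGraph.commonNeighbors ε₁ ε₂) = lam)
    {u p q : V} (hp : G.Adj u p) (hq : G.Adj u q) (hpq : p ≠ q) :
    G.degree u + (if G.Adj p q then 1 else 0) = lam + 2 := by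
  classical
  have hadj : G.lineGraph.Adj ⟨s(u,p), hp⟩ ⟨s(u,q), hq⟩ := by
    rw [lineGraph_adj_iff_exists]
    refine ⟨?_, u, Sym2.mem_mk_left _ _, Sym2.mem_mk_left _ _⟩
    intro h
    rw [edgeSet_ext_iff, Sym2.congr_right] at h
    exact hpq h
  have h1 := hlam _ _ hadj
  have h2 := lineGraph_common_adj hp hq hpq
  rw [h1] at h2
  omega

theorem structure_thm [Fintype V] {G : SimpleGraph V} {k lam e : ℕ}
    (hreg : G.lineGraph.IsRegularOfDegree k)
    (hlam : ∀ ε₁ ε₂ : G.edgeSet, G.lineGraph.Adj ε₁ ε₂ →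
      Fintype.card (G.lineGraph.commonNeighbors ε₁ ε₂) = lam)
    (hTop : G.lineGraph ≠ ⊤)
    (C : Finset G.edgeSet) (he : 0 < e)
    (hCclique : G.lineGraph.IsClique ↑C)
    (hCe : ∀ ε : G.edgeSet, ε ∉ C → (C.filter (fun γ => G.lineGraph.Adj ε γ)).card = e) :
    (∃ S : Finset V, 4 ≤ S.card ∧ S.card = lam + 2 ∧
        ∀ a b, G.Adj a b ↔ a ≠ b ∧ a ∈ S ∧ b ∈ S) ∨
    (∃ P Q : Finset V, 2 ≤ P.card ∧ P.card = Q.card ∧ Disjoint P Q ∧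
        ∀ a b, G.Adj a b ↔ ((a ∈ P ∧ b ∈ Q) ∨ (a ∈ Q ∧ b ∈ P))) := by
  classical
  obtain ⟨x₁, y₁, x₂, y₂, hxy₁, hxy₂, hd1, hd2, hd3, hd4⟩ := exists_disjoint_edges hTop
  have hCne : C.Nonempty := by
    rcases Finset.eq_empty_or_nonempty C with rfl | h
    · exfalso
      have := hCe ⟨s(x₁,y₁), hxy₁⟩ (Finset.notMem_empty _)
      simp only [Finset.filter_empty, Finset.card_empty] at this
      omega
    · exact h
  by_cases htri : ∃ x y z, G.Adj x y ∧ G.Adj y z ∧ G.Adj x z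
  · -- triangle case
    left
    obtain ⟨x, y, z, hxy, hyz, hxz⟩ := htri
    have hKdeg : ∀ u p q, G.Adj u p → G.Adj u q → p ≠ q → G.Adj p q → G.degree u = lam + 1 := by
      intro u p q hp hq hpq hadj
      have := F2 hlam hp hq hpq
      rw [if_pos hadj] at this
      omega
    have hNclique : ∀ u, G.degree u = lam + 1 →
        ∀ p q, G.Adj u p → G.Adj u q → p ≠ q → G.Adj p q := by
      intro u hu p q hp hq hpq
      by_contra hnadj
      have := F2 hlam hp hq hpq
      rw [if_neg hnadj] at this
      omega
    have dx : G.degree x = lam + 1 := hKdeg x y z hxy hxz hyz.ne hyz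
    have hScl : ∀ v w, G.degree v = lam + 1 → G.Adj v w →
        G.degree w = lam + 1 ∧
          insert w (G.neighborFinset w) = insert v (G.neighborFinset v) := by
      intro v w hv hvw
      have hmem : w ∈ G.neighborFinset v := (mem_neighborFinset _ _ _).mpr hvw
      have hlam1 : 1 ≤ lam := by
        have := two_le_degree hxy hxz hyz.ne
        omega
      have hcard : 1 < (G.neighborFinset v).card := by
        rw [card_neighborFinset_eq_degree, hv]; omega
      obtain ⟨p, hpmem, hpw⟩ := Finset.exists_mem_ne hcard w
      have hvp : G.Adj v p := (mem_neighborFinset _ _ _).mp hpmem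
      have hpadj : G.Adj p w := hNclique v hv p w hvp hvw hpw
      have hdw : G.degree w = lam + 1 := hKdeg w v p hvw.symm hpadj.symm hvp.ne hvp
      refine ⟨hdw, ?_⟩
      have hsub : insert v (G.neighborFinset v) ⊆ insert w (G.neighborFinset w) := by
        intro t ht
        rcases Finset.mem_insert.mp ht with rfl | ht
        · exact Finset.mem_insert_of_mem ((mem_neighborFinset _ _ _).mpr hvw.symm)
        · by_cases htw : t = w
          · subst htw; exact Finset.mem_insert_self _ _
          · exact Finset.mem_insert_of_mem ((mem_neighborFinset _ _ _).mpr
              ((hNclique v hv t w ((mem_neighborFinset _ _ _).mp ht) hvw htw).symm))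
      have hcards : (insert w (G.neighborFinset w)).card ≤
          (insert v (G.neighborFinset v)).card := by
        rw [Finset.card_insert_of_notMem (notMem_neighborFinset_self _ _),
          Finset.card_insert_of_notMem (notMem_neighborFinset_self _ _),
          card_neighborFinset_eq_degree, card_neighborFinset_eq_degree, hv, hdw]
      exact (Finset.eq_of_subset_of_card_le hsub hcards).symm
    set S := insert x (G.neighborFinset x) with hS
    have hScard : S.card = lam + 2 := by
      rw [hS, Finset.card_insert_of_notMem (notMem_neighborFinset_self _ _),
        card_neighborFinset_eq_degree, dx]
    have P1 : ∀ w ∈ S, G.degree w = lam + 1 ∧ insert w (G.neighborFinset w) = S := by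
      intro w hw
      rcases Finset.mem_insert.mp hw with rfl | hw
      · exact ⟨dx, rfl⟩
      · exact hScl x w dx ((mem_neighborFinset _ _ _).mp hw)
    have P2 : ∀ a b, a ∈ S → b ∈ S → a ≠ b → G.Adj a b := by
      intro a b ha hb hab
      rw [← (P1 a ha).2] at hb
      rcases Finset.mem_insert.mp hb with rfl | hb
      · exact absurd rfl hab
      · exact (mem_neighborFinset _ _ _).mp hb
    have hcont : ∀ a b, G.Adj a b → a ∈ S → b ∈ S := by
      intro a b hab ha
      rw [← (P1 a ha).2]
      exact Finset.mem_insert_of_mem ((mem_neighborFinset _ _ _).mpr hab)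
    have hio : ∀ (γ : G.edgeSet) (t : V), t ∈ (γ : Sym2 V) → t ∈ S →
        ∀ r ∈ (γ : Sym2 V), r ∈ S := by
      intro γ t ht htS r hr
      obtain ⟨p, hp, hrep⟩ := rep_of_mem γ ht
      rw [hrep, Sym2.mem_iff] at hr
      rcases hr with rfl | rfl
      · exact htS
      · exact hcont t r hp htS
    have hxS : x ∈ S := Finset.mem_insert_self _ _
    have hall : ∀ a b, G.Adj a b → a ∈ S := by
      by_contra hc
      push_neg at hc
      obtain ⟨a, b, hab, haS⟩ := hc
      have hgS : ∀ t ∈ (s(a,b) : Sym2 V), t ∉ S := by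
        intro t ht htS
        exact haS (hio ⟨s(a,b), hab⟩ t ht htS a (Sym2.mem_mk_left _ _))
      obtain ⟨γ₀, hγ₀⟩ := hCne
      by_cases hγ₀S : ∃ t ∈ (γ₀ : Sym2 V), t ∈ S
      · obtain ⟨t₀, ht₀, ht₀S⟩ := hγ₀S
        have hCin : ∀ γ ∈ C, ∀ r ∈ (γ : Sym2 V), r ∈ S := by
          intro γ hγ
          by_cases hγγ₀ : γ = γ₀
          · subst hγγ₀; exact hio γ t₀ ht₀ ht₀S
          · have hadj : G.lineGraph.Adj γ₀ γ :=
              hCclique (Finset.mem_coe.mpr hγ₀) (Finset.mem_coe.mpr hγ) (Ne.symm hγγ₀)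
            rw [lineGraph_adj_iff_exists] at hadj
            obtain ⟨-, t, ht1, ht2⟩ := hadj
            exact hio γ t ht2 (hio γ₀ t₀ ht₀ ht₀S t ht1)
        have hgC : (⟨s(a,b), hab⟩ : G.edgeSet) ∉ C := by
          intro hmem
          exact hgS a (Sym2.mem_mk_left _ _) (hCin _ hmem a (Sym2.mem_mk_left _ _))
        have hcard := hCe ⟨s(a,b), hab⟩ hgC
        have hne : (C.filter (fun γ => G.lineGraph.Adj ⟨s(a,b), hab⟩ γ)).Nonempty := by
          rw [← Finset.card_pos, hcard]; exact he
        obtain ⟨γ, hγf⟩ := hne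
        obtain ⟨hγC, hγadj⟩ := Finset.mem_filter.mp hγf
        rw [lineGraph_adj_iff_exists] at hγadj
        obtain ⟨-, t, ht1, ht2⟩ := hγadj
        exact hgS t ht1 (hCin γ hγC t ht2)
      · push_neg at hγ₀S
        have hεxyC : (⟨s(x,y), hxy⟩ : G.edgeSet) ∉ C := by
          intro hmem
          have hne : γ₀ ≠ ⟨s(x,y), hxy⟩ := by
            intro h
            exact hγ₀S x (by rw [h]; exact Sym2.mem_mk_left _ _) hxS
          have hadj : G.lineGraph.Adj γ₀ ⟨s(x,y), hxy⟩ :=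
            hCclique (Finset.mem_coe.mpr hγ₀) (Finset.mem_coe.mpr hmem) hne
          rw [lineGraph_adj_iff_exists] at hadj
          obtain ⟨-, t, ht1, ht2⟩ := hadj
          exact hγ₀S t ht1 (hio ⟨s(x,y), hxy⟩ x (Sym2.mem_mk_left _ _) hxS t ht2)
        have hcard := hCe ⟨s(x,y), hxy⟩ hεxyC
        have hne : (C.filter (fun γ => G.lineGraph.Adj ⟨s(x,y), hxy⟩ γ)).Nonempty := by
          rw [← Finset.card_pos, hcard]; exact he
        obtain ⟨γ, hγf⟩ := hne
        obtain ⟨hγC, hγadj⟩ := Finset.mem_filter.mp hγf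
        rw [lineGraph_adj_iff_exists] at hγadj
        obtain ⟨-, t, ht1, ht2⟩ := hγadj
        have htS : t ∈ S := hio ⟨s(x,y), hxy⟩ x (Sym2.mem_mk_left _ _) hxS t ht1
        by_cases hγγ₀ : γ = γ₀
        · exact hγ₀S t (hγγ₀ ▸ ht2) htS
        · have hadj' : G.lineGraph.Adj γ γ₀ :=
            hCclique (Finset.mem_coe.mpr hγC) (Finset.mem_coe.mpr hγ₀) hγγ₀
          rw [lineGraph_adj_iff_exists] at hadj'
          obtain ⟨-, t', ht1', ht2'⟩ := hadj'
          exact hγ₀S t' ht2' (hio γ t ht2 htS t' ht1')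
    have hadjiff : ∀ a b, G.Adj a b ↔ a ≠ b ∧ a ∈ S ∧ b ∈ S :=
      fun a b => ⟨fun h => ⟨h.ne, hall a b h, hall b a h.symm⟩,
        fun ⟨hne, ha, hb⟩ => P2 a b ha hb hne⟩
    have h4 : 4 ≤ S.card := by
      have hsub : ({x₁, y₁, x₂, y₂} : Finset V) ⊆ S := by
        intro t ht
        simp only [Finset.mem_insert, Finset.mem_singleton] at ht
        rcases ht with rfl | rfl | rfl | rfl
        · exact hall _ _ hxy₁
        · exact hall _ _ hxy₁.symm
        · exact hall _ _ hxy₂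
        · exact hall _ _ hxy₂.symm
      have hc4 : ({x₁, y₁, x₂, y₂} : Finset V).card = 4 := by
        rw [Finset.card_insert_of_notMem (by simp [hxy₁.ne, hd1, hd2]),
          Finset.card_insert_of_notMem (by simp [hd3, hd4]),
          Finset.card_insert_of_notMem (by simp [hxy₂.ne]), Finset.card_singleton]
      rw [← hc4]
      exact Finset.card_le_card hsub
    exact ⟨S, h4, hScard, hadjiff⟩
  · -- triangle-free case
    right
    push_neg at htri
    have hTF : ∀ p q r, G.Adj p q → G.Adj q r → ¬ G.Adj p r := htri
    have F3 : ∀ u p q, G.Adj u p → G.Adj u q → p ≠ q → G.degree u = lam + 2 := by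
      intro u p q hp hq hpq
      have h2 := F2 hlam hp hq hpq
      rw [if_neg (hTF p u q hp.symm hq)] at h2
      omega
    have hdisj12 : ∀ t : V, t ∈ (s(x₁,y₁) : Sym2 V) → t ∈ (s(x₂,y₂) : Sym2 V) → False := by
      intro t h1 h2
      rw [Sym2.mem_iff] at h1 h2
      rcases h1 with rfl | rfl <;> rcases h2 with rfl | rfl
      exacts [hd1 rfl, hd2 rfl, hd3 rfl, hd4 rfl]
    by_cases hC2 : ∃ γ₁ ∈ C, ∃ γ₂ ∈ C, γ₁ ≠ γ₂
    · -- C has two elements: star case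
      obtain ⟨γ₁, hγ₁C, γ₂, hγ₂C, hγne⟩ := hC2
      have hadj12 : G.lineGraph.Adj γ₁ γ₂ :=
        hCclique (Finset.mem_coe.mpr hγ₁C) (Finset.mem_coe.mpr hγ₂C) hγne
      rw [lineGraph_adj_iff_exists] at hadj12
      obtain ⟨-, u, hu1, hu2⟩ := hadj12
      obtain ⟨p, hup, hγ₁rep⟩ := rep_of_mem γ₁ hu1
      obtain ⟨q, huq, hγ₂rep⟩ := rep_of_mem γ₂ hu2
      have hpq : p ≠ q := by
        intro h
        apply hγne
        apply Subtype.ext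
        rw [hγ₁rep, hγ₂rep, h]
      have hstar : ∀ γ ∈ C, u ∈ (γ : Sym2 V) := by
        intro γ hγ
        by_cases h1 : γ = γ₁
        · rw [h1, hγ₁rep]; exact Sym2.mem_mk_left _ _
        · by_cases h2 : γ = γ₂
          · rw [h2, hγ₂rep]; exact Sym2.mem_mk_left _ _
          · have hadj1 : G.lineGraph.Adj γ₁ γ :=
              hCclique (Finset.mem_coe.mpr hγ₁C) (Finset.mem_coe.mpr hγ)
                (fun h => h1 h.symm)
            have hadj2 : G.lineGraph.Adj γ₂ γ :=
              hCclique (Finset.mem_coe.mpr hγ₂C) (Finset.mem_coe.mpr hγ)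
                (fun h => h2 h.symm)
            rw [lineGraph_adj_iff_exists] at hadj1 hadj2
            obtain ⟨-, t₁, ht₁1, ht₁2⟩ := hadj1
            obtain ⟨-, t₂, ht₂1, ht₂2⟩ := hadj2
            rw [hγ₁rep, Sym2.mem_iff] at ht₁1
            rw [hγ₂rep, Sym2.mem_iff] at ht₂1
            rcases ht₁1 with rfl | rfl
            · exact ht₁2
            · rcases ht₂1 with rfl | rfl
              · exact ht₂2
              · exfalso
                have hγval : (γ : Sym2 V) = s(t₁, t₂) :=
                  (Sym2.mem_and_mem_iff hpq).mp ⟨ht₁2, ht₂2⟩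
                have hadjpq : G.Adj t₁ t₂ := by
                  have hh := γ.prop
                  rw [hγval, mem_edgeSet] at hh
                  exact hh
                exact hTF t₁ u t₂ hup.symm huq hadjpq
      have hedge_avoid : ∃ w z : V, G.Adj w z ∧ u ≠ w ∧ u ≠ z := by
        by_cases h : u = x₁ ∨ u = y₁
        · refine ⟨x₂, y₂, hxy₂, ?_, ?_⟩ <;> rcases h with rfl | rfl
          exacts [hd1, hd3, hd2, hd4]
        · push_neg at h
          exact ⟨x₁, y₁, hxy₁, h.1, h.2⟩
      obtain ⟨w₀, z₀, hwz₀, huw₀, huz₀⟩ := hedge_avoid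
      have hstar3 : ∀ w z, G.Adj w z → u ≠ w → u ≠ z →
          ((G.Adj u w ∧ ¬G.Adj u z) ∨ (G.Adj u z ∧ ¬G.Adj u w)) := by
        intro w z hwz huw huz
        have hgC : (⟨s(w,z), hwz⟩ : G.edgeSet) ∉ C := by
          intro h
          have hh := hstar _ h
          rw [Sym2.mem_iff] at hh
          rcases hh with h' | h'
          exacts [huw h', huz h']
        have hne' : (C.filter (fun γ => G.lineGraph.Adj ⟨s(w,z), hwz⟩ γ)).Nonempty := by
          rw [← Finset.card_pos, hCe _ hgC]
          exact he
        obtain ⟨γ, hγf⟩ := hne'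
        obtain ⟨hγC', hγadj⟩ := Finset.mem_filter.mp hγf
        rw [lineGraph_adj_iff_exists] at hγadj
        obtain ⟨-, t, ht1, ht2⟩ := hγadj
        have htu : u ≠ t := by
          rintro rfl
          rw [Sym2.mem_iff] at ht1
          rcases ht1 with h' | h'
          exacts [huw h', huz h']
        have hγval : (γ : Sym2 V) = s(u, t) :=
          (Sym2.mem_and_mem_iff htu).mp ⟨hstar γ hγC', ht2⟩
        have hut : G.Adj u t := by
          have hh := γ.prop; rw [hγval, mem_edgeSet] at hh; exact hh
        rw [Sym2.mem_iff] at ht1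
        rcases ht1 with rfl | rfl
        · exact Or.inl ⟨hut, fun h => hTF t u z hut.symm h hwz⟩
        · exact Or.inr ⟨hut, fun h => hTF w u t h.symm hut hwz⟩
      set A := G.neighborFinset u with hA
      have hdu : G.degree u = lam + 2 := F3 u p q hup huq hpq
      have hAcard : A.card = lam + 2 := by
        rw [hA, card_neighborFinset_eq_degree, hdu]
      obtain ⟨x₀, zz, hux₀, hx₀z, hnuz, huzz⟩ :
          ∃ x₀ zz, G.Adj u x₀ ∧ G.Adj x₀ zz ∧ ¬G.Adj u zz ∧ u ≠ zz := by
        rcases hstar3 w₀ z₀ hwz₀ huw₀ huz₀ with ⟨h1, h2⟩ | ⟨h1, h2⟩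
        · exact ⟨w₀, z₀, h1, hwz₀, h2, huz₀⟩
        · exact ⟨z₀, w₀, h1, hwz₀.symm, h2, huw₀⟩
      set B := (G.neighborFinset x₀).erase u with hB
      have hdx₀ : G.degree x₀ = lam + 2 := F3 x₀ u zz hux₀.symm hx₀z huzz
      have hBcard : B.card = lam + 1 := by
        rw [hB, Finset.card_erase_of_mem ((mem_neighborFinset _ _ _).mpr hux₀.symm),
          card_neighborFinset_eq_degree, hdx₀]
        omega
      have hBprop : ∀ b ∈ B, ¬G.Adj u b ∧ G.degree b = lam + 2 := by
        intro b hb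
        rw [hB, Finset.mem_erase, mem_neighborFinset] at hb
        obtain ⟨hbu, hbx⟩ := hb
        have hnub : ¬ G.Adj u b := by
          rcases hstar3 x₀ b hbx hux₀.ne (Ne.symm hbu) with ⟨-, h2⟩ | ⟨h1, h2⟩
          · exact h2
          · exact absurd hux₀ h2
        refine ⟨hnub, ?_⟩
        have e1 := F1 hreg hbx
        have e2 := F1 hreg hux₀
        omega
      have hNB : ∀ b ∈ B, G.neighborFinset b = A := by
        intro b hb
        have hbu : b ≠ u := (Finset.mem_erase.mp (hB ▸ hb)).1
        have hsub : G.neighborFinset b ⊆ A := by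
          intro t ht
          have hbt : G.Adj b t := (mem_neighborFinset _ _ _).mp ht
          have htu : u ≠ t := fun h => (hBprop b hb).1 (h ▸ hbt.symm)
          rcases hstar3 b t hbt (Ne.symm hbu) htu with ⟨h1, -⟩ | ⟨h1, -⟩
          · exact absurd h1 (hBprop b hb).1
          · rw [hA, mem_neighborFinset]
            exact h1
        apply Finset.eq_of_subset_of_card_le hsub
        rw [hAcard, card_neighborFinset_eq_degree, (hBprop b hb).2]
      have hBne : B.Nonempty := by
        rw [← Finset.card_pos, hBcard]
        omega
      have huB : u ∉ B := fun h => (Finset.mem_erase.mp (hB ▸ h)).1 rfl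
      have hNA : ∀ a ∈ A, G.neighborFinset a = insert u B := by
        intro a ha
        have hua : G.Adj u a := (mem_neighborFinset _ _ _).mp (hA ▸ ha)
        have hsub : insert u B ⊆ G.neighborFinset a := by
          intro t ht
          rcases Finset.mem_insert.mp ht with rfl | ht
          · exact (mem_neighborFinset _ _ _).mpr hua.symm
          · have hnt := hNB t ht
            have : a ∈ G.neighborFinset t := by rw [hnt]; exact ha
            exact (mem_neighborFinset _ _ _).mpr ((mem_neighborFinset _ _ _).mp this).symm
        have hda : G.degree a = lam + 2 := by
          obtain ⟨b, hbB⟩ := hBne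
          have hab : G.Adj a b :=
            (mem_neighborFinset _ _ _).mp (hsub (Finset.mem_insert_of_mem hbB))
          have hub' : u ≠ b := fun h => huB (h ▸ hbB)
          exact F3 a u b hua.symm hab hub'
        have hucard : (insert u B).card = lam + 2 := by
          rw [Finset.card_insert_of_notMem huB, hBcard]
        exact (Finset.eq_of_subset_of_card_le hsub
          (by rw [card_neighborFinset_eq_degree, hda, hucard])).symm
      refine ⟨A, insert u B, ?_, ?_, ?_, ?_⟩
      · rw [hAcard]; omega
      · rw [hAcard, Finset.card_insert_of_notMem huB, hBcard]
      · rw [Finset.disjoint_left]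
        intro a haA haQ
        have hua : G.Adj u a := (mem_neighborFinset _ _ _).mp (hA ▸ haA)
        rcases Finset.mem_insert.mp haQ with rfl | haB
        · exact G.irrefl hua
        · exact (hBprop a haB).1 hua
      · intro a b
        constructor
        · intro hab
          by_cases hau : u = a
          · subst hau
            exact Or.inr ⟨Finset.mem_insert_self _ _,
              by rw [hA, mem_neighborFinset]; exact hab⟩
          · by_cases hbu : u = b
            · subst hbu
              exact Or.inl ⟨by rw [hA, mem_neighborFinset]; exact hab.symm,
                Finset.mem_insert_self _ _⟩
            · rcases hstar3 a b hab hau hbu with ⟨h1, -⟩ | ⟨h1, -⟩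
              · have haA : a ∈ A := by rw [hA, mem_neighborFinset]; exact h1
                refine Or.inl ⟨haA, ?_⟩
                rw [← hNA a haA, mem_neighborFinset]
                exact hab
              · have hbA : b ∈ A := by rw [hA, mem_neighborFinset]; exact h1
                refine Or.inr ⟨?_, hbA⟩
                rw [← hNA b hbA, mem_neighborFinset]
                exact hab.symm
        · rintro (⟨ha, hb⟩ | ⟨ha, hb⟩)
          · have hh := hNA a ha
            rw [← hh] at hb
            exact (mem_neighborFinset _ _ _).mp hb
          · have hh := hNA b hb
            rw [← hh] at ha
            exact ((mem_neighborFinset _ _ _).mp ha).symm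
    · -- C is a singleton: contradiction
      exfalso
      push_neg at hC2
      obtain ⟨γ₀, hγ₀⟩ := hCne
      obtain ⟨p, q, hpq, rfl⟩ := edge_rep γ₀
      have hCsing : ∀ γ ∈ C, γ = ⟨s(p,q), hpq⟩ := fun γ hγ => hC2 γ hγ _ hγ₀
      have hmeets : ∀ (γ : G.edgeSet), γ ≠ ⟨s(p,q), hpq⟩ →
          ∃ t, t ∈ (γ : Sym2 V) ∧ t ∈ (s(p,q) : Sym2 V) := by
        intro γ hne
        have hγC : γ ∉ C := fun h => hne (hCsing γ h)
        have hne' : (C.filter (fun δ => G.lineGraph.Adj γ δ)).Nonempty := by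
          rw [← Finset.card_pos, hCe γ hγC]
          exact he
        obtain ⟨δ, hδf⟩ := hne'
        obtain ⟨hδC, hδadj⟩ := Finset.mem_filter.mp hδf
        rw [lineGraph_adj_iff_exists] at hδadj
        obtain ⟨-, t, ht1, ht2⟩ := hδadj
        refine ⟨t, ht1, ?_⟩
        rw [hCsing δ hδC] at ht2
        exact ht2
      have key : ∀ p' q', G.Adj p' q' → s(p',q') = s(p,q) →
          p' ∈ (s(x₁,y₁) : Sym2 V) → q' ∈ (s(x₂,y₂) : Sym2 V) → False := by
        intro p' q' hp'q' hval hp'1 hq'2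
        have hq'n1 : q' ∉ (s(x₁,y₁) : Sym2 V) := fun h => hdisj12 q' h hq'2
        have hp'n2 : p' ∉ (s(x₂,y₂) : Sym2 V) := fun h => hdisj12 p' hp'1 h
        obtain ⟨xx, hp'xx, hε₁rep⟩ := rep_of_mem ⟨s(x₁,y₁), hxy₁⟩ hp'1
        obtain ⟨yy, hq'yy, hε₂rep⟩ := rep_of_mem ⟨s(x₂,y₂), hxy₂⟩ hq'2
        simp only at hε₁rep hε₂rep
        have hxxq' : xx ≠ q' := by
          rintro rfl
          apply hq'n1
          rw [hε₁rep]
          exact Sym2.mem_mk_right _ _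
        have hyyp' : yy ≠ p' := by
          rintro rfl
          apply hp'n2
          rw [hε₂rep]
          exact Sym2.mem_mk_right _ _
        have hxxp' : xx ≠ p' := fun h => G.irrefl (h ▸ hp'xx)
        have hdq' : G.degree q' = lam + 2 :=
          F3 q' p' yy hp'q'.symm hq'yy (Ne.symm hyyp')
        have hNxx : G.neighborFinset xx ⊆ {p'} := by
          intro t ht
          rw [Finset.mem_singleton]
          by_contra htp'
          have hxxt : G.Adj xx t := (mem_neighborFinset _ _ _).mp ht
          have hne : (⟨s(xx,t), hxxt⟩ : G.edgeSet) ≠ ⟨s(p,q), hpq⟩ := by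
            intro h
            simp only [edgeSet_ext_iff] at h
            rw [← hval] at h
            have : xx ∈ s(p',q') := by rw [← h]; exact Sym2.mem_mk_left _ _
            rw [Sym2.mem_iff] at this
            rcases this with h' | h'
            exacts [hxxp' h', hxxq' h']
          obtain ⟨t', ht'1, ht'2⟩ := hmeets _ hne
          rw [← hval, Sym2.mem_iff] at ht'2
          rw [Sym2.mem_iff] at ht'1
          rcases ht'1 with rfl | rfl
          · rcases ht'2 with h' | h'
            exacts [hxxp' h', hxxq' h']
          · rcases ht'2 with rfl | rfl
            · exact htp' rfl
            · exact hTF p' xx t' hp'xx hxxt hp'q'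
        have hdxx : G.degree xx ≤ 1 := by
          rw [← card_neighborFinset_eq_degree]
          exact le_trans (Finset.card_le_card hNxx) (by simp)
        have e1 := F1 hreg hp'xx
        have e2 := F1 hreg hp'q'
        omega
      have h₁γ₀ : (⟨s(x₁,y₁), hxy₁⟩ : G.edgeSet) ≠ ⟨s(p,q), hpq⟩ := by
        intro h
        simp only [edgeSet_ext_iff] at h
        have hne2 : (⟨s(x₂,y₂), hxy₂⟩ : G.edgeSet) ≠ ⟨s(p,q), hpq⟩ := by
          intro h2
          simp only [edgeSet_ext_iff] at h2
          rw [← h] at h2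
          exact hdisj12 x₂ (by rw [← h2]; exact Sym2.mem_mk_left _ _) (Sym2.mem_mk_left _ _)
        obtain ⟨t, ht1, ht2⟩ := hmeets ⟨s(x₂,y₂), hxy₂⟩ hne2
        rw [← h] at ht2
        exact hdisj12 t ht2 ht1
      have h₂γ₀ : (⟨s(x₂,y₂), hxy₂⟩ : G.edgeSet) ≠ ⟨s(p,q), hpq⟩ := by
        intro h
        simp only [edgeSet_ext_iff] at h
        have hne1 : (⟨s(x₁,y₁), hxy₁⟩ : G.edgeSet) ≠ ⟨s(p,q), hpq⟩ := by
          intro h2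
          simp only [edgeSet_ext_iff] at h2
          rw [← h] at h2
          exact hdisj12 x₁ (Sym2.mem_mk_left _ _) (by rw [← h2]; exact Sym2.mem_mk_left _ _)
        obtain ⟨t, ht1, ht2⟩ := hmeets ⟨s(x₁,y₁), hxy₁⟩ hne1
        rw [← h] at ht2
        exact hdisj12 t ht1 ht2
      obtain ⟨t₁, ht₁1, ht₁2⟩ := hmeets _ h₁γ₀
      obtain ⟨t₂, ht₂1, ht₂2⟩ := hmeets _ h₂γ₀
      simp only at ht₁1 ht₂1
      have ht₁₂ : t₁ ≠ t₂ := fun h => hdisj12 t₁ ht₁1 (h ▸ ht₂1)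
      rw [Sym2.mem_iff] at ht₁2 ht₂2
      rcases ht₁2 with rfl | rfl <;> rcases ht₂2 with rfl | rfl
      · exact ht₁₂ rfl
      · exact key t₁ t₂ hpq (rfl) ht₁1 ht₂1
      · exact key t₁ t₂ hpq.symm Sym2.eq_swap ht₁1 ht₂1
      · exact ht₁₂ rfl

lemma lineGraph_iso_of_maps {W : Type*} {G : SimpleGraph V} {H : SimpleGraph W}
    (f : V → W) (g : W → V)
    (hgf : ∀ a b, G.Adj a b → g (f a) = a)
    (hfg : ∀ a b, H.Adj a b → f (g a) = a)
    (hf : ∀ a b, G.Adj a b → H.Adj (f a) (f b))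
    (hg : ∀ a b, H.Adj a b → G.Adj (g a) (g b)) :
    Nonempty (G.lineGraph ≃g H.lineGraph) := by
  have hmemf : ∀ ε : G.edgeSet, Sym2.map f (ε : Sym2 V) ∈ H.edgeSet := by
    intro ε
    obtain ⟨a, b, hab, rfl⟩ := edge_rep ε
    rw [Sym2.map_pair_eq, mem_edgeSet]
    exact hf a b hab
  have hmemg : ∀ η : H.edgeSet, Sym2.map g (η : Sym2 W) ∈ G.edgeSet := by
    intro η
    obtain ⟨a, b, hab, rfl⟩ := edge_rep η
    rw [Sym2.map_pair_eq, mem_edgeSet]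
    exact hg a b hab
  have hleft : ∀ ε : G.edgeSet, Sym2.map g (Sym2.map f (ε : Sym2 V)) = (ε : Sym2 V) := by
    intro ε
    obtain ⟨a, b, hab, rfl⟩ := edge_rep ε
    rw [Sym2.map_pair_eq, Sym2.map_pair_eq, hgf a b hab, hgf b a hab.symm]
  have hright : ∀ η : H.edgeSet, Sym2.map f (Sym2.map g (η : Sym2 W)) = (η : Sym2 W) := by
    intro η
    obtain ⟨a, b, hab, rfl⟩ := edge_rep η
    rw [Sym2.map_pair_eq, Sym2.map_pair_eq, hfg a b hab, hfg b a hab.symm]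
  have hinj : ∀ (ε : G.edgeSet) (t t' : V), t ∈ (ε : Sym2 V) → f t = f t' →
      ∀ (ε' : G.edgeSet), t' ∈ (ε' : Sym2 V) → t = t' := by
    intro ε t t' ht hftt' ε' ht'
    obtain ⟨p, hp, -⟩ := rep_of_mem ε ht
    obtain ⟨p', hp', -⟩ := rep_of_mem ε' ht'
    rw [← hgf t p hp, hftt', hgf t' p' hp']
  refine ⟨⟨⟨fun ε => ⟨Sym2.map f (ε : Sym2 V), hmemf ε⟩,
    fun η => ⟨Sym2.map g (η : Sym2 W), hmemg η⟩, ?_, ?_⟩, ?_⟩⟩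
  · intro ε
    exact Subtype.ext (hleft ε)
  · intro η
    exact Subtype.ext (hright η)
  · intro ε₁ ε₂
    simp only [Equiv.coe_fn_mk, lineGraph_adj_iff_exists, ne_eq, Subtype.mk.injEq]
    constructor
    · rintro ⟨hne, t, ht1, ht2⟩
      rw [Sym2.mem_map] at ht1 ht2
      obtain ⟨v, hv, rfl⟩ := ht1
      obtain ⟨v', hv', hvv'⟩ := ht2
      have hv'' : v = v' := hinj ε₁ v v' hv hvv'.symm ε₂ hv'
      refine ⟨?_, v, hv, hv'' ▸ hv'⟩
      intro h
      exact hne (by rw [Subtype.ext_iff.mp h])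
    · rintro ⟨hne, t, ht1, ht2⟩
      refine ⟨?_, f t, Sym2.mem_map.mpr ⟨t, ht1, rfl⟩, Sym2.mem_map.mpr ⟨t, ht2, rfl⟩⟩
      intro h
      apply hne
      apply Subtype.ext
      rw [← hleft ε₁, ← hleft ε₂, h]

lemma clique_iso [Fintype V] {G : SimpleGraph V} {S : Finset V} {n : ℕ}
    (hcard : S.card = n) (hn : 0 < n)
    (hadj : ∀ a b, G.Adj a b ↔ a ≠ b ∧ a ∈ S ∧ b ∈ S) :
    Nonempty (G.lineGraph ≃g (⊤ : SimpleGraph (Fin n)).lineGraph) := by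
  classical
  obtain ⟨x₀, hx₀⟩ : S.Nonempty := Finset.card_pos.mp (by omega)
  have φ : {x // x ∈ S} ≃ Fin n := (S.equivFin).trans (finCongr hcard)
  set f : V → Fin n := fun v => if h : v ∈ S then φ ⟨v, h⟩ else φ ⟨x₀, hx₀⟩ with hfdef
  set g : Fin n → V := fun i => ((φ.symm i) : V) with hgdef
  have hgS : ∀ i, g i ∈ S := fun i => (φ.symm i).prop
  have hgf : ∀ v, v ∈ S → g (f v) = v := by
    intro v hv
    simp only [hfdef, hgdef, dif_pos hv, Equiv.symm_apply_apply]
  have hfg : ∀ i, f (g i) = i := by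
    intro i
    simp only [hfdef, hgdef, dif_pos (φ.symm i).prop, Subtype.coe_eta,
      Equiv.apply_symm_apply]
  apply lineGraph_iso_of_maps f g
  · intro a b hab
    exact hgf a ((hadj a b).mp hab).2.1
  · intro a b _
    exact hfg a
  · intro a b hab
    obtain ⟨hne, ha, hb⟩ := (hadj a b).mp hab
    rw [top_adj]
    intro h
    apply hne
    rw [← hgf a ha, h, hgf b hb]
  · intro a b hab
    rw [top_adj] at hab
    refine (hadj _ _).mpr ⟨?_, hgS a, hgS b⟩
    intro h
    apply hab
    rw [← hfg a, h, hfg b]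

lemma bipartite_iso [Fintype V] {G : SimpleGraph V} {P Q : Finset V} {m : ℕ}
    (hPcard : P.card = m) (hQcard : Q.card = m) (hm : 0 < m) (hdisj : Disjoint P Q)
    (hadj : ∀ a b, G.Adj a b ↔ ((a ∈ P ∧ b ∈ Q) ∨ (a ∈ Q ∧ b ∈ P))) :
    Nonempty (G.lineGraph ≃g (completeBipartiteGraph (Fin m) (Fin m)).lineGraph) := by
  classical
  obtain ⟨p₀, hp₀⟩ : P.Nonempty := Finset.card_pos.mp (by omega)
  have φP : {x // x ∈ P} ≃ Fin m := P.equivFin.trans (finCongr hPcard)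
  have φQ : {x // x ∈ Q} ≃ Fin m := Q.equivFin.trans (finCongr hQcard)
  set f : V → Fin m ⊕ Fin m := fun v =>
    if h : v ∈ P then Sum.inl (φP ⟨v, h⟩)
    else if h : v ∈ Q then Sum.inr (φQ ⟨v, h⟩)
    else Sum.inl (φP ⟨p₀, hp₀⟩) with hfdef
  set g : Fin m ⊕ Fin m → V :=
    Sum.elim (fun i => ((φP.symm i) : V)) (fun j => ((φQ.symm j) : V)) with hgdef
  have hfP : ∀ v (h : v ∈ P), f v = Sum.inl (φP ⟨v, h⟩) := by
    intro v h
    simp only [hfdef, dif_pos h]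
  have hfQ : ∀ v (h : v ∈ Q), f v = Sum.inr (φQ ⟨v, h⟩) := by
    intro v h
    have hvP : v ∉ P := fun h' => (Finset.disjoint_left.mp hdisj h') h
    simp only [hfdef, dif_neg hvP, dif_pos h]
  have hgP : ∀ i, g (Sum.inl i) ∈ P := fun i => (φP.symm i).prop
  have hgQ : ∀ j, g (Sum.inr j) ∈ Q := fun j => (φQ.symm j).prop
  have hgf : ∀ v, (v ∈ P ∨ v ∈ Q) → g (f v) = v := by
    intro v hv
    rcases hv with h | h
    · rw [hfP v h]
      simp only [hgdef, Sum.elim_inl, Equiv.symm_apply_apply]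
    · rw [hfQ v h]
      simp only [hgdef, Sum.elim_inr, Equiv.symm_apply_apply]
  have hfg : ∀ w, f (g w) = w := by
    intro w
    rcases w with i | j
    · rw [hfP _ (hgP i)]
      simp only [hgdef, Sum.elim_inl, Subtype.coe_eta, Equiv.apply_symm_apply]
    · rw [hfQ _ (hgQ j)]
      simp only [hgdef, Sum.elim_inr, Subtype.coe_eta, Equiv.apply_symm_apply]
  apply lineGraph_iso_of_maps f g
  · intro a b hab
    rcases (hadj a b).mp hab with ⟨ha, -⟩ | ⟨ha, -⟩
    · exact hgf a (Or.inl ha)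
    · exact hgf a (Or.inr ha)
  · intro a b _
    exact hfg a
  · intro a b hab
    rcases (hadj a b).mp hab with ⟨ha, hb⟩ | ⟨ha, hb⟩
    · rw [hfP a ha, hfQ b hb]
      simp
    · rw [hfQ a ha, hfP b hb]
      simp
  · intro a b hab
    rcases a with i | i <;> rcases b with j | j <;> simp only [completeBipartiteGraph_adj] at hab
    · simp at hab
    · exact (hadj _ _).mpr (Or.inl ⟨hgP i, hgQ j⟩)
    · exact (hadj _ _).mpr (Or.inr ⟨hgQ i, hgP j⟩)
    · simp at hab

lemma clique_srg [Fintype V] {G : SimpleGraph V} {S : Finset V} {k lam : ℕ}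
    (hadj : ∀ a b, G.Adj a b ↔ a ≠ b ∧ a ∈ S ∧ b ∈ S)
    (hreg : G.lineGraph.IsRegularOfDegree k)
    (hlam : ∀ ε₁ ε₂ : G.edgeSet, G.lineGraph.Adj ε₁ ε₂ →
      Fintype.card (G.lineGraph.commonNeighbors ε₁ ε₂) = lam) :
    G.lineGraph.IsSRGWith (Fintype.card G.edgeSet) k lam 4 := by
  classical
  refine ⟨rfl, hreg, fun ε₁ ε₂ h => hlam ε₁ ε₂ h, ?_⟩
  intro ε₁ ε₂ hne hnadj
  obtain ⟨a, b, c, d, hab, hcd, rfl, rfl, h1, h2, h3, h4⟩ := not_adj_reps ε₁ ε₂ hne hnadj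
  rw [lineGraph_common_nonadj hab hcd h1 h2 h3 h4]
  have haS : a ∈ S := ((hadj a b).mp hab).2.1
  have hbS : b ∈ S := ((hadj a b).mp hab).2.2
  have hcS : c ∈ S := ((hadj c d).mp hcd).2.1
  have hdS : d ∈ S := ((hadj c d).mp hcd).2.2
  have hedges : ∀ w ∈ ({s(a,c), s(a,d), s(b,c), s(b,d)} : Finset (Sym2 V)),
      w ∈ G.edgeSet := by
    intro w hw
    simp only [Finset.mem_insert, Finset.mem_singleton] at hw
    rcases hw with rfl | rfl | rfl | rfl
    · exact (G.mem_edgeSet).mpr ((hadj a c).mpr ⟨h1, haS, hcS⟩)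
    · exact (G.mem_edgeSet).mpr ((hadj a d).mpr ⟨h2, haS, hdS⟩)
    · exact (G.mem_edgeSet).mpr ((hadj b c).mpr ⟨h3, hbS, hcS⟩)
    · exact (G.mem_edgeSet).mpr ((hadj b d).mpr ⟨h4, hbS, hdS⟩)
  rw [Finset.filter_true_of_mem hedges]
  rw [Finset.card_insert_of_notMem (by
      simp [Sym2.eq_iff, hab.ne, hcd.ne, h1, h2, h3, h4]),
    Finset.card_insert_of_notMem (by
      simp [Sym2.eq_iff, hab.ne, hcd.ne, h1, h2, h3, h4]),
    Finset.card_insert_of_notMem (by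
      simp [Sym2.eq_iff, hab.ne, hcd.ne, h1, h2, h3, h4]),
    Finset.card_singleton]

lemma bipartite_srg [Fintype V] {G : SimpleGraph V} {P Q : Finset V} {k lam : ℕ}
    (hdisj : Disjoint P Q)
    (hadj : ∀ a b, G.Adj a b ↔ ((a ∈ P ∧ b ∈ Q) ∨ (a ∈ Q ∧ b ∈ P)))
    (hreg : G.lineGraph.IsRegularOfDegree k)
    (hlam : ∀ ε₁ ε₂ : G.edgeSet, G.lineGraph.Adj ε₁ ε₂ →
      Fintype.card (G.lineGraph.commonNeighbors ε₁ ε₂) = lam) :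
    G.lineGraph.IsSRGWith (Fintype.card G.edgeSet) k lam 2 := by
  classical
  have hPP : ∀ x y, x ∈ P → y ∈ P → ¬G.Adj x y := by
    intro x y hx hy h
    rcases (hadj x y).mp h with ⟨-, hyQ⟩ | ⟨hxQ, -⟩
    · exact (Finset.disjoint_left.mp hdisj hy) hyQ
    · exact (Finset.disjoint_left.mp hdisj hx) hxQ
  have hQQ : ∀ x y, x ∈ Q → y ∈ Q → ¬G.Adj x y := by
    intro x y hx hy h
    rcases (hadj x y).mp h with ⟨hxP, -⟩ | ⟨-, hyP⟩
    · exact (Finset.disjoint_left.mp hdisj hxP) hx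
    · exact (Finset.disjoint_left.mp hdisj hyP) hy
  refine ⟨rfl, hreg, fun ε₁ ε₂ h => hlam ε₁ ε₂ h, ?_⟩
  intro ε₁ ε₂ hne hnadj
  obtain ⟨a, b, c, d, hab, hcd, rfl, rfl, h1, h2, h3, h4⟩ := not_adj_reps ε₁ ε₂ hne hnadj
  rw [lineGraph_common_nonadj hab hcd h1 h2 h3 h4]
  rw [Finset.filter_insert, Finset.filter_insert, Finset.filter_insert,
    Finset.filter_singleton]
  rcases (hadj a b).mp hab with ⟨haP, hbQ⟩ | ⟨haQ, hbP⟩ <;>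
    rcases (hadj c d).mp hcd with ⟨hcP, hdQ⟩ | ⟨hcQ, hdP⟩
  · rw [if_neg (fun h => hPP a c haP hcP ((G.mem_edgeSet).mp h)),
      if_pos ((G.mem_edgeSet).mpr ((hadj a d).mpr (Or.inl ⟨haP, hdQ⟩))),
      if_pos ((G.mem_edgeSet).mpr ((hadj b c).mpr (Or.inr ⟨hbQ, hcP⟩))),
      if_neg (fun h => hQQ b d hbQ hdQ ((G.mem_edgeSet).mp h))]
    rw [Finset.card_insert_of_notMem (by simp [Sym2.eq_iff, hab.ne, h1])]
    simp
  · rw [if_pos ((G.mem_edgeSet).mpr ((hadj a c).mpr (Or.inl ⟨haP, hcQ⟩))),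
      if_neg (fun h => hPP a d haP hdP ((G.mem_edgeSet).mp h)),
      if_neg (fun h => hQQ b c hbQ hcQ ((G.mem_edgeSet).mp h)),
      if_pos ((G.mem_edgeSet).mpr ((hadj b d).mpr (Or.inr ⟨hbQ, hdP⟩)))]
    rw [Finset.card_insert_of_notMem (by simp [Sym2.eq_iff, hab.ne, h2])]
    simp
  · rw [if_pos ((G.mem_edgeSet).mpr ((hadj a c).mpr (Or.inr ⟨haQ, hcP⟩))),
      if_neg (fun h => hQQ a d haQ hdQ ((G.mem_edgeSet).mp h)),
      if_neg (fun h => hPP b c hbP hcP ((G.mem_edgeSet).mp h)),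
      if_pos ((G.mem_edgeSet).mpr ((hadj b d).mpr (Or.inl ⟨hbP, hdQ⟩)))]
    rw [Finset.card_insert_of_notMem (by simp [Sym2.eq_iff, hab.ne, h2])]
    simp
  · rw [if_neg (fun h => hQQ a c haQ hcQ ((G.mem_edgeSet).mp h)),
      if_pos ((G.mem_edgeSet).mpr ((hadj a d).mpr (Or.inr ⟨haQ, hdP⟩))),
      if_pos ((G.mem_edgeSet).mpr ((hadj b c).mpr (Or.inl ⟨hbP, hcQ⟩))),
      if_neg (fun h => hPP b d hbP hdP ((G.mem_edgeSet).mp h))]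
    rw [Finset.card_insert_of_notMem (by simp [Sym2.eq_iff, hab.ne, h1])]
    simp

end Stmt17Aux

/-- If the line graph `L(G)` of a graph `G` is a Neumaier graph, then `L(G)`
is isomorphic to an `(s+1) × (s+1)` rook graph (the line graph of `K_{s+1,s+1}`), to a Johnson
graph `J(s+2, 2)` (the line graph of `K_{s+2}`) with `s ≥ 2`, or to the octahedral graph
`K_{2,2,2}`; in particular, `L(G)` is strongly regular. -/
theorem stmt17 [Fintype V] (G : SimpleGraph V)
    (hN : IsNeumaier G.lineGraph) :
    ((∃ s : ℕ, 0 < s ∧ Nonempty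
        (G.lineGraph ≃g (completeBipartiteGraph (Fin (s + 1)) (Fin (s + 1))).lineGraph)) ∨
     (∃ s : ℕ, 2 ≤ s ∧ Nonempty
        (G.lineGraph ≃g (⊤ : SimpleGraph (Fin (s + 2))).lineGraph)) ∨
     Nonempty (G.lineGraph ≃g SimpleGraph.completeMultipartiteGraph (fun _ : Fin 3 => Fin 2))) ∧
    ∃ n k l m : ℕ, G.lineGraph.IsSRGWith n k l m := by
  classical
  obtain ⟨⟨v, k, lam, hv, hreg, hlam⟩, hTop, C, e, hCclique, he, hCe⟩ := hN
  rcases Stmt17Aux.structure_thm hreg hlam hTop C he hCclique hCe with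
    ⟨S, h4, hScard, hadj⟩ | ⟨P, Q, hP2, hPQ, hdisj, hadj⟩
  · refine ⟨Or.inr (Or.inl ⟨lam, by omega, ?_⟩),
      Fintype.card G.edgeSet, k, lam, 4, Stmt17Aux.clique_srg hadj hreg hlam⟩
    exact Stmt17Aux.clique_iso hScard (by omega) hadj
  · refine ⟨Or.inl ⟨P.card - 1, by omega, ?_⟩,
      Fintype.card G.edgeSet, k, lam, 2, Stmt17Aux.bipartite_srg hdisj hadj hreg hlam⟩
    exact Stmt17Aux.bipartite_iso (by omega) (by omega) (by omega) hdisj hadj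
end

section
/- There is no Neumaier graph whose adjacency matrix has exactly four distinct real eigenvalues; that is, if Γ is a Neumaier graph, then the set of real eigenvalues of its adjacency matrix does not have cardinality 4. -/
open scoped Classical
open Matrix

variable {V : Type*}

open Finset
section NeumaierProof

private lemma const_of_eig [Fintype V] [Nonempty V] {G : SimpleGraph V} {k : ℕ}
    (hreg : G.IsRegularOfDegree k) (hconn : G.Preconnected) (f : V → ℝ)
    (hf : G.adjMatrix ℝ *ᵥ f = (k : ℝ) • f) : ∀ x y : V, f x = f y := by
  obtain ⟨x₀, -, hx₀⟩ := Finset.exists_max_image (univ : Finset V) f ⟨Classical.arbitrary V, mem_univ _⟩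
  have hmax : ∀ z, f z ≤ f x₀ := fun z => hx₀ z (mem_univ z)
  -- step lemma
  have step : ∀ a b : V, G.Adj a b → f a = f x₀ → f b = f x₀ := by
    intro a b hab ha
    have hsum : ∑ u ∈ G.neighborFinset a, f u = (k : ℝ) * f a := by
      have := congrFun hf a
      rw [SimpleGraph.adjMatrix_mulVec_apply] at this
      simpa using this
    have hzero : ∑ u ∈ G.neighborFinset a, (f x₀ - f u) = 0 := by
      rw [Finset.sum_sub_distrib, hsum, Finset.sum_const, ha,
        SimpleGraph.card_neighborFinset_eq_degree, hreg a]
      ring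
    have hall := (Finset.sum_eq_zero_iff_of_nonneg
      (fun u _ => by linarith [hmax u])).mp hzero
    have hb := hall b (by rwa [SimpleGraph.mem_neighborFinset])
    linarith
  have walkstep : ∀ (a b : V) (w : G.Walk a b), f a = f x₀ → f b = f x₀ := by
    intro a b w
    induction w with
    | nil => exact id
    | cons h p ih => exact fun ha => ih (step _ _ h ha)
  intro x y
  have hz : ∀ z, f z = f x₀ := fun z => walkstep x₀ z (hconn x₀ z).some rfl
  rw [hz x, hz y]


private lemma neumaier_preconnected [Fintype V] {G : SimpleGraph V} {C : Finset V} {e : ℕ}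
    (hCl : G.IsClique ↑C) (he : 0 < e) (hE : ∀ x : V, x ∉ C → (C.filter (fun y => G.Adj x y)).card = e)
    (hC2 : 2 ≤ C.card) : G.Preconnected := by
  obtain ⟨c₀, hc₀⟩ := Finset.card_pos.mp (by omega : 0 < C.card)
  have hreach : ∀ x : V, G.Reachable x c₀ := by
    intro x
    by_cases hx : x ∈ C
    · rcases eq_or_ne x c₀ with rfl | hne
      · exact SimpleGraph.Reachable.refl _
      · exact (hCl hx hc₀ hne).reachable
    · have hcard := hE x hx
      have : (C.filter (fun y => G.Adj x y)).Nonempty := by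
        rw [← Finset.card_pos, hcard]; exact he
      obtain ⟨y, hy⟩ := this
      rw [Finset.mem_filter] at hy
      have h1 : G.Reachable x y := hy.2.reachable
      refine h1.trans ?_
      rcases eq_or_ne y c₀ with rfl | hne
      · exact SimpleGraph.Reachable.refl _
      · exact (hCl hy.1 hc₀ hne).reachable
  exact fun x y => (hreach x).trans (hreach y).symm

private lemma not_top_exists [Fintype V] {G : SimpleGraph V} (h : G ≠ ⊤) :
    ∃ x y : V, x ≠ y ∧ ¬ G.Adj x y := by
  by_contra hc
  push_neg at hc
  refine h ?_
  ext x y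
  simp only [SimpleGraph.top_adj]
  exact ⟨fun ha => ha.ne, fun hne => hc x y hne⟩

-- k + 2 ≤ n
private lemma k_add_two_le [Fintype V] {G : SimpleGraph V} {k : ℕ}
    (hreg : G.IsRegularOfDegree k) (h : G ≠ ⊤) : k + 2 ≤ Fintype.card V := by
  obtain ⟨x, y, hxy, hnadj⟩ := not_top_exists h
  have hsub : G.neighborFinset x ⊆ (univ.erase y).erase x := by
    intro z hz
    rw [SimpleGraph.mem_neighborFinset] at hz
    refine Finset.mem_erase.mpr ⟨hz.ne', Finset.mem_erase.mpr ⟨?_, mem_univ z⟩⟩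
    rintro rfl; exact hnadj hz
  have := Finset.card_le_card hsub
  rw [SimpleGraph.card_neighborFinset_eq_degree, hreg x] at this
  have h1 : ((univ.erase y).erase x).card + 2 = Fintype.card V := by
    rw [Finset.card_erase_of_mem (Finset.mem_erase.mpr ⟨hxy, mem_univ x⟩),
      Finset.card_erase_of_mem (mem_univ y), Finset.card_univ]
    have h2 : 2 ≤ Fintype.card V := Fintype.one_lt_card_iff.mpr ⟨x, y, hxy⟩
    omega
  omega

-- clique has ≥ 2 vertices
private lemma clique_two_le [Fintype V] [Nonempty V] {G : SimpleGraph V} {C : Finset V} {e k : ℕ}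
    (hreg : G.IsRegularOfDegree k) (htop : G ≠ ⊤) (he : 0 < e)
    (hE : ∀ x : V, x ∉ C → (C.filter (fun y => G.Adj x y)).card = e) : 2 ≤ C.card := by
  have hk2 := k_add_two_le hreg htop
  by_contra hlt
  push_neg at hlt
  interval_cases h : C.card
  · obtain ⟨x⟩ := (inferInstance : Nonempty V)
    have hx : x ∉ C := by
      intro hmem
      have : 0 < C.card := Finset.card_pos.mpr ⟨x, hmem⟩
      omega
    have := hE x hx
    have hle : (C.filter (fun y => G.Adj x y)).card ≤ C.card := Finset.card_filter_le _ _
    omega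
  · obtain ⟨c, hc⟩ := Finset.card_eq_one.mp h
    subst hc
    -- every x ≠ c is adjacent to c
    have hadj : ∀ x : V, x ≠ c → G.Adj x c := by
      intro x hxc
      have hx : x ∉ ({c} : Finset V) := by simp [hxc]
      have := hE x hx
      have hne : (({c} : Finset V).filter (fun y => G.Adj x y)).Nonempty := by
        rw [← Finset.card_pos, this]; exact he
      obtain ⟨y, hy⟩ := hne
      rw [Finset.mem_filter, Finset.mem_singleton] at hy
      rw [← hy.1]; exact hy.2
    -- then degree of c is n - 1, contradicting k + 2 ≤ n
    have hsub : univ.erase c ⊆ G.neighborFinset c := by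
      intro z hz
      rw [Finset.mem_erase] at hz
      rw [SimpleGraph.mem_neighborFinset]
      exact (hadj z hz.1).symm
    have hcd := Finset.card_le_card hsub
    rw [SimpleGraph.card_neighborFinset_eq_degree, hreg c,
      Finset.card_erase_of_mem (mem_univ c), Finset.card_univ] at hcd
    omega


section EntryLemmas
variable [Fintype V] {G : SimpleGraph V} {k l : ℕ}

private lemma common_card (G : SimpleGraph V) (x y : V) :
    Fintype.card (G.commonNeighbors x y) = (G.neighborFinset x ∩ G.neighborFinset y).card := by
  rw [← Set.toFinset_card]
  congr 1
  ext z
  rw [Set.mem_toFinset]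
  simp [SimpleGraph.commonNeighbors, SimpleGraph.mem_neighborFinset]

private lemma B_entry (G : SimpleGraph V) (x y : V) :
    (G.adjMatrix ℝ * G.adjMatrix ℝ) x y
      = ((G.neighborFinset x ∩ G.neighborFinset y).card : ℝ) := by
  rw [SimpleGraph.adjMatrix_mul_apply]
  have : ∀ u ∈ G.neighborFinset x, G.adjMatrix ℝ u y = if u ∈ G.neighborFinset y then 1 else 0 := by
    intro u _
    simp [SimpleGraph.adjMatrix_apply, SimpleGraph.mem_neighborFinset, SimpleGraph.adj_comm]
  rw [Finset.sum_congr rfl this, Finset.sum_ite_mem, Finset.sum_const]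
  simp
end EntryLemmas


section Counting
variable [Fintype V] {G : SimpleGraph V} {k l : ℕ}
set_option linter.unusedSectionVars false

-- card of intersection as real ite-sum
private lemma card_inter_real (s t : Finset V) :
    ((s ∩ t).card : ℝ) = ∑ z ∈ s, if z ∈ t then (1:ℝ) else 0 := by
  rw [Finset.sum_ite_mem, Finset.sum_const]
  simp

-- the split of univ into {x}, N(x), NA(x)
private lemma sum_split (G : SimpleGraph V) (x : V) (f : V → ℝ) :
    ∑ z, f z = f x + (∑ z ∈ G.neighborFinset x, f z)
      + ∑ z ∈ univ.filter (fun z => z ≠ x ∧ ¬ G.Adj x z), f z := by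
  have h1 : ∑ z, f z = f x + ∑ z ∈ univ.erase x, f z :=
    (Finset.add_sum_erase univ f (mem_univ x)).symm
  have e1 : (univ.erase x).filter (fun z => G.Adj x z) = G.neighborFinset x := by
    ext z
    simp only [Finset.mem_filter, Finset.mem_erase, SimpleGraph.mem_neighborFinset, mem_univ,
      and_true, true_and]
    exact ⟨fun h => h.2, fun h => ⟨h.ne', h⟩⟩
  have e2 : (univ.erase x).filter (fun z => ¬ G.Adj x z)
      = univ.filter (fun z => z ≠ x ∧ ¬ G.Adj x z) := by
    ext z
    simp only [Finset.mem_filter, Finset.mem_erase, mem_univ, and_true, true_and]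
  rw [h1, ← Finset.sum_filter_add_sum_filter_not (univ.erase x) (fun z => G.Adj x z) f, e1, e2,
    add_assoc]

private lemma NA_card (G : SimpleGraph V) (hreg : G.IsRegularOfDegree k) (x : V) :
    ((univ.filter (fun z => z ≠ x ∧ ¬ G.Adj x z)).card : ℝ) = Fintype.card V - 1 - k := by
  have := sum_split G x (fun _ => (1:ℝ))
  simp only [Finset.sum_const, Finset.card_univ, nsmul_eq_mul, mul_one] at this
  rw [SimpleGraph.card_neighborFinset_eq_degree, hreg x] at this
  linarith

-- row sums of A
private lemma A_rowsum (G : SimpleGraph V) (hreg : G.IsRegularOfDegree k) (x : V) :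
    ∑ y, G.adjMatrix ℝ x y = k := by
  have : ∑ y, G.adjMatrix ℝ x y = (G.adjMatrix ℝ *ᵥ (fun _ => (1:ℝ))) x := by
    simp [Matrix.mulVec, dotProduct]
  rw [this, SimpleGraph.adjMatrix_mulVec_apply]
  rw [Finset.sum_const, SimpleGraph.card_neighborFinset_eq_degree, hreg x]
  simp

-- column sums of A
private lemma A_colsum (G : SimpleGraph V) (hreg : G.IsRegularOfDegree k) (y : V) :
    ∑ x, G.adjMatrix ℝ x y = k := by
  have : ∀ x, G.adjMatrix ℝ x y = G.adjMatrix ℝ y x := by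
    intro x; simp [SimpleGraph.adjMatrix_apply, SimpleGraph.adj_comm]
  rw [Finset.sum_congr rfl (fun x _ => this x)]
  exact A_rowsum G hreg y

private lemma B_rowsum (G : SimpleGraph V) (hreg : G.IsRegularOfDegree k) (x : V) :
    ∑ z, (G.adjMatrix ℝ * G.adjMatrix ℝ) x z = (k : ℝ) * k := by
  simp_rw [Matrix.mul_apply]
  rw [Finset.sum_comm]
  have : ∀ j, ∑ z, G.adjMatrix ℝ x j * G.adjMatrix ℝ j z = G.adjMatrix ℝ x j * k := by
    intro j
    rw [← Finset.mul_sum, A_rowsum G hreg j]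
  rw [Finset.sum_congr rfl (fun j _ => this j), ← Finset.sum_mul, A_rowsum G hreg x]
end Counting


section Clique
variable [Fintype V] {G : SimpleGraph V} {k l e : ℕ} {C : Finset V}
set_option linter.unusedSectionVars false

private lemma NC_eq (hCl : G.IsClique ↑C) {x : V} (hx : x ∈ C) :
    G.neighborFinset x ∩ C = C.erase x := by
  ext z
  simp only [Finset.mem_inter, SimpleGraph.mem_neighborFinset, Finset.mem_erase]
  constructor
  · exact fun h => ⟨h.1.ne', h.2⟩
  · exact fun h => ⟨hCl hx h.2 (Ne.symm h.1), h.2⟩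

private lemma NC_card (hCl : G.IsClique ↑C) {x : V} (hx : x ∈ C) :
    (G.neighborFinset x ∩ C).card + 1 = C.card := by
  rw [NC_eq hCl hx, Finset.card_erase_of_mem hx]
  have : 0 < C.card := Finset.card_pos.mpr ⟨x, hx⟩
  omega

private lemma NdiffC_card (hreg : G.IsRegularOfDegree k) (hCl : G.IsClique ↑C)
    {x : V} (hx : x ∈ C) : (G.neighborFinset x \ C).card + C.card = k + 1 := by
  have hsplit : (G.neighborFinset x ∩ C).card + (G.neighborFinset x \ C).card
      = (G.neighborFinset x).card := by
    rw [Finset.card_inter_add_card_sdiff]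
  rw [SimpleGraph.card_neighborFinset_eq_degree, hreg x] at hsplit
  have := NC_card hCl hx
  omega

-- edge count between C and its complement:  s * (k - s + 1) = e * (n - s)
private lemma edge_count (hreg : G.IsRegularOfDegree k) (hCl : G.IsClique ↑C)
    (hE : ∀ x : V, x ∉ C → (C.filter (fun y => G.Adj x y)).card = e) :
    (C.card : ℝ) * ((k : ℝ) - C.card + 1) = (e : ℝ) * ((Fintype.card V : ℝ) - C.card) := by
  have key : ∑ x ∈ C, ((G.neighborFinset x \ C).card : ℝ)
      = ∑ y ∈ univ \ C, ((C.filter (fun x => G.Adj x y)).card : ℝ) := by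
    have h1 : ∀ x ∈ C, ((G.neighborFinset x \ C).card : ℝ)
        = ∑ y ∈ univ \ C, if G.Adj x y then (1:ℝ) else 0 := by
      intro x _
      rw [Finset.sum_ite, Finset.sum_const, Finset.sum_const]
      have : (univ \ C).filter (fun y => G.Adj x y) = G.neighborFinset x \ C := by
        ext z
        simp only [Finset.mem_filter, Finset.mem_sdiff, SimpleGraph.mem_neighborFinset, mem_univ,
          true_and]
        tauto
      rw [this]; simp
    have h2 : ∀ y ∈ univ \ C, ((C.filter (fun x => G.Adj x y)).card : ℝ)
        = ∑ x ∈ C, if G.Adj x y then (1:ℝ) else 0 := by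
      intro y _
      rw [Finset.sum_ite, Finset.sum_const, Finset.sum_const]; simp
    rw [Finset.sum_congr rfl h1, Finset.sum_congr rfl h2, Finset.sum_comm]
  have hL : ∑ x ∈ C, ((G.neighborFinset x \ C).card : ℝ)
      = (C.card : ℝ) * ((k : ℝ) - C.card + 1) := by
    rw [Finset.sum_congr rfl (fun x hx => ?_), Finset.sum_const]
    · rw [nsmul_eq_mul]
    · have := NdiffC_card hreg hCl hx
      have hc : ((G.neighborFinset x \ C).card : ℝ) + C.card = (k : ℝ) + 1 := by
        exact_mod_cast congrArg (fun (n : ℕ) => (n : ℝ)) this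
      linarith
  have hR : ∑ y ∈ univ \ C, ((C.filter (fun x => G.Adj x y)).card : ℝ)
      = (e : ℝ) * ((Fintype.card V : ℝ) - C.card) := by
    have hterm : ∀ y ∈ univ \ C, ((C.filter (fun x => G.Adj x y)).card : ℝ) = (e : ℝ) := by
      intro y hy
      have hy' : y ∉ C := (Finset.mem_sdiff.mp hy).2
      have hfe : C.filter (fun x => G.Adj x y) = C.filter (fun x => G.Adj y x) := by
        apply Finset.filter_congr
        intro z _
        simp [SimpleGraph.adj_comm]
      rw [hfe]
      exact_mod_cast hE y hy'
    rw [Finset.sum_congr rfl hterm, Finset.sum_const, nsmul_eq_mul,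
      Finset.card_sdiff_of_subset (Finset.subset_univ C), Finset.card_univ]
    have hle : C.card ≤ Fintype.card V := by
      rw [← Finset.card_univ]; exact Finset.card_le_card (Finset.subset_univ C)
    rw [Nat.cast_sub hle]
    ring
  rw [← hL, key, hR]
end Clique


section VI
variable [Fintype V] {G : SimpleGraph V} {k l e : ℕ} {C : Finset V}
set_option linter.unusedSectionVars false

private lemma NC_eq' (hCl : G.IsClique ↑C) {x : V} (hx : x ∈ C) :
    G.neighborFinset x ∩ C = C.erase x := by
  ext z
  simp only [Finset.mem_inter, SimpleGraph.mem_neighborFinset, Finset.mem_erase]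
  exact ⟨fun h => ⟨h.1.ne', h.2⟩, fun h => ⟨hCl hx h.2 (Ne.symm h.1), h.2⟩⟩

-- the count of clique vertices (≠ x) adjacent to an outside vertex z not adjacent to x
private lemma filter_count_e (hCl : G.IsClique ↑C)
    (hE : ∀ x : V, x ∉ C → (C.filter (fun y => G.Adj x y)).card = e)
    {x z : V} (hx : x ∈ C) (hzx : z ≠ x) (hznadj : ¬ G.Adj x z) :
    ((C.erase x).filter (fun y => G.Adj y z)).card = e := by
  have hzC : z ∉ C := by
    intro hzC
    exact hznadj (hCl hx hzC (Ne.symm hzx))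
  have h1 : (C.erase x).filter (fun y => G.Adj y z) = (C.filter (fun y => G.Adj y z)).erase x :=
    Finset.filter_erase _ _ _
  have h2 : x ∉ C.filter (fun y => G.Adj y z) := by
    simp only [Finset.mem_filter]
    rintro ⟨-, hadj⟩
    exact hznadj hadj
  rw [h1, Finset.erase_eq_of_notMem h2]
  have h3 : C.filter (fun y => G.Adj y z) = C.filter (fun y => G.Adj z y) := by
    apply Finset.filter_congr; intro y _; simp [SimpleGraph.adj_comm]
  rw [h3]
  exact hE z hzC

-- (I): double count of μ-values from a clique vertex
private lemma identity_I (hCl : G.IsClique ↑C)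
    (hE : ∀ x : V, x ∉ C → (C.filter (fun y => G.Adj x y)).card = e)
    {x : V} (hx : x ∈ C) :
    ∑ y ∈ C.erase x, ∑ z ∈ (univ.filter (fun z => z ≠ x ∧ ¬ G.Adj x z)).filter
        (fun z => G.Adj y z), ((G.neighborFinset x ∩ G.neighborFinset z).card : ℝ)
      = (e : ℝ) * ∑ z ∈ univ.filter (fun z => z ≠ x ∧ ¬ G.Adj x z),
          ((G.neighborFinset x ∩ G.neighborFinset z).card : ℝ) := by
  set NA := univ.filter (fun z => z ≠ x ∧ ¬ G.Adj x z) with hNA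
  have h1 : ∀ y ∈ C.erase x,
      ∑ z ∈ NA.filter (fun z => G.Adj y z),
          ((G.neighborFinset x ∩ G.neighborFinset z).card : ℝ)
        = ∑ z ∈ NA, if G.Adj y z then ((G.neighborFinset x ∩ G.neighborFinset z).card : ℝ)
            else 0 := by
    intro y _
    rw [Finset.sum_filter]
  rw [Finset.sum_congr rfl h1, Finset.sum_comm, Finset.mul_sum]
  apply Finset.sum_congr rfl
  intro z hz
  rw [Finset.mem_filter] at hz
  have hcount := filter_count_e hCl hE hx hz.2.1 hz.2.2
  rw [← Finset.sum_filter, Finset.sum_const, hcount, nsmul_eq_mul]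

-- (V): (s-1) * l = (s-1) * (s-2) + (k-s+1) * (e-1)
private lemma identity_V (hreg : G.IsRegularOfDegree k) (hCl : G.IsClique ↑C)
    (hlam : ∀ x y : V, G.Adj x y → (G.neighborFinset x ∩ G.neighborFinset y).card = l)
    (hE : ∀ x : V, x ∉ C → (C.filter (fun y => G.Adj x y)).card = e)
    (hs2 : 2 ≤ C.card) (he1 : 1 ≤ e) {x : V} (hx : x ∈ C) :
    ((C.card : ℝ) - 1) * l
      = ((C.card : ℝ) - 1) * ((C.card : ℝ) - 2)
        + ((k : ℝ) - C.card + 1) * ((e : ℝ) - 1) := by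
  set s := C.card with hs
  -- left evaluation
  have hL : ∑ y ∈ C.erase x, ((G.neighborFinset x ∩ G.neighborFinset y).card : ℝ)
      = ((s : ℝ) - 1) * l := by
    have hterm : ∀ y ∈ C.erase x,
        ((G.neighborFinset x ∩ G.neighborFinset y).card : ℝ) = (l : ℝ) := by
      intro y hy
      rw [Finset.mem_erase] at hy
      exact_mod_cast congrArg Nat.cast (hlam x y (hCl hx hy.2 (Ne.symm hy.1)))
    rw [Finset.sum_congr rfl hterm, Finset.sum_const, nsmul_eq_mul,
      Finset.card_erase_of_mem hx]
    rw [Nat.cast_sub (by omega : 1 ≤ s)]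
    simp
  -- right evaluation: swap the summation
  have hR : ∑ y ∈ C.erase x, ((G.neighborFinset x ∩ G.neighborFinset y).card : ℝ)
      = ((s : ℝ) - 1) * ((s : ℝ) - 2) + ((k : ℝ) - s + 1) * ((e : ℝ) - 1) := by
    have hterm : ∀ y ∈ C.erase x,
        ((G.neighborFinset x ∩ G.neighborFinset y).card : ℝ)
          = ∑ z ∈ G.neighborFinset x, if z ∈ G.neighborFinset y then (1:ℝ) else 0 := by
      intro y _
      rw [Finset.sum_ite_mem, Finset.sum_const]
      simp
    rw [Finset.sum_congr rfl hterm, Finset.sum_comm]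
    have hinner : ∀ z ∈ G.neighborFinset x,
        ∑ y ∈ C.erase x, (if z ∈ G.neighborFinset y then (1:ℝ) else 0)
          = (((C.erase x).filter (fun y => z ∈ G.neighborFinset y)).card : ℝ) := by
      intro z _
      rw [← Finset.sum_filter, Finset.sum_const, nsmul_eq_mul, mul_one]
    rw [Finset.sum_congr rfl hinner,
      ← Finset.sum_filter_add_sum_filter_not (G.neighborFinset x) (fun z => z ∈ C)]
    have hfin1 : (G.neighborFinset x).filter (fun z => z ∈ C) = C.erase x := by
      rw [← NC_eq' hCl hx]
      ext z
      simp [Finset.mem_inter, Finset.mem_filter]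
    have hfin2 : (G.neighborFinset x).filter (fun z => z ∉ C) = G.neighborFinset x \ C := by
      ext z
      simp [Finset.mem_sdiff, Finset.mem_filter]
    rw [hfin1, hfin2]
    -- first part: each z ∈ C.erase x contributes s - 2
    have hpart1 : ∀ z ∈ C.erase x,
        (((C.erase x).filter (fun y => z ∈ G.neighborFinset y)).card : ℝ) = (s : ℝ) - 2 := by
      intro z hz
      rw [Finset.mem_erase] at hz
      have hfe : (C.erase x).filter (fun y => z ∈ G.neighborFinset y)
          = (C.erase x).erase z := by
        ext y
        simp only [Finset.mem_filter, Finset.mem_erase, SimpleGraph.mem_neighborFinset]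
        constructor
        · rintro ⟨⟨hyx, hyC⟩, hadj⟩
          exact ⟨hadj.ne, hyx, hyC⟩
        · rintro ⟨hyz, hyx, hyC⟩
          exact ⟨⟨hyx, hyC⟩, hCl hyC hz.2 hyz⟩
      have hcard2 : ((C.erase x).erase z).card + 2 = s := by
        rw [Finset.card_erase_of_mem (Finset.mem_erase.mpr hz), Finset.card_erase_of_mem hx]
        omega
      have := congrArg (fun (n : ℕ) => (n : ℝ)) hcard2
      push_cast at this
      rw [hfe]
      linarith
    -- second part: each z ∈ N(x) \ C contributes e - 1
    have hpart2 : ∀ z ∈ G.neighborFinset x \ C,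
        (((C.erase x).filter (fun y => z ∈ G.neighborFinset y)).card : ℝ) = (e : ℝ) - 1 := by
      intro z hz
      rw [Finset.mem_sdiff, SimpleGraph.mem_neighborFinset] at hz
      have hfe : (C.erase x).filter (fun y => z ∈ G.neighborFinset y)
          = (C.filter (fun y => G.Adj y z)).erase x := by
        rw [← Finset.filter_erase]
        apply Finset.filter_congr
        intro y _
        simp [SimpleGraph.mem_neighborFinset, SimpleGraph.adj_comm]
      have hxmem : x ∈ C.filter (fun y => G.Adj y z) := by
        rw [Finset.mem_filter]
        exact ⟨hx, hz.1⟩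
      have hecard : (C.filter (fun y => G.Adj y z)).card = e := by
        have h3 : C.filter (fun y => G.Adj y z) = C.filter (fun y => G.Adj z y) := by
          apply Finset.filter_congr; intro y _; simp [SimpleGraph.adj_comm]
        rw [h3]
        exact hE z hz.2
      rw [hfe, Finset.card_erase_of_mem hxmem, hecard,
        Nat.cast_sub (by omega : 1 ≤ e)]
      simp
    rw [Finset.sum_congr rfl hpart1, Finset.sum_congr rfl hpart2, Finset.sum_const,
      Finset.sum_const, nsmul_eq_mul, nsmul_eq_mul, Finset.card_erase_of_mem hx]
    have hkcard : (G.neighborFinset x \ C).card + C.card = k + 1 := by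
      have hsplit : (G.neighborFinset x ∩ C).card + (G.neighborFinset x \ C).card
          = (G.neighborFinset x).card := Finset.card_inter_add_card_sdiff _ _
      rw [SimpleGraph.card_neighborFinset_eq_degree, hreg x] at hsplit
      have h4 : (G.neighborFinset x ∩ C).card + 1 = C.card := by
        rw [NC_eq' hCl hx, Finset.card_erase_of_mem hx]
        omega
      omega
    have hc : ((G.neighborFinset x \ C).card : ℝ) = (k : ℝ) - s + 1 := by
      have := congrArg (fun (n : ℕ) => (n : ℝ)) hkcard
      push_cast at this
      rw [hs]
      linarith
    rw [hc, Nat.cast_sub (by omega : 1 ≤ s)]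
    push_cast
    ring
  rw [← hL, hR]
end VI


section Spectral
variable [Fintype V]
set_option linter.unusedSectionVars false

private lemma factor_mulVec (A : Matrix V V ℝ) (θ a : ℝ) (u : V → ℝ)
    (h : A *ᵥ u = a • u) : (A - θ • 1) *ᵥ u = (a - θ) • u := by
  rw [Matrix.sub_mulVec, Matrix.smul_mulVec, Matrix.one_mulVec, h, sub_smul]

private lemma adj_isHermitian (G : SimpleGraph V) : (G.adjMatrix ℝ).IsHermitian := by
  rw [Matrix.IsHermitian, conjTranspose_eq_transpose_of_trivial]
  exact G.transpose_adjMatrix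

-- if N kills an orthonormal eigenbasis it kills everything
private lemma mulVec_eq_zero_of_eigenbasis {A : Matrix V V ℝ} (hA : A.IsHermitian)
    (N : Matrix V V ℝ) (h : ∀ j : V, N *ᵥ ⇑(hA.eigenvectorBasis j) = 0) (v : V → ℝ) :
    N *ᵥ v = 0 := by
  have hbasis : N.mulVecLin = 0 := by
    apply (hA.eigenvectorBasis.toBasis.map (WithLp.linearEquiv 2 ℝ (V → ℝ))).ext
    intro j
    rw [Module.Basis.map_apply, OrthonormalBasis.coe_toBasis]
    exact h j
  have := congrFun (congrArg (fun (L : (V → ℝ) →ₗ[ℝ] (V → ℝ)) => L.toFun) hbasis) v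
  simpa using this

-- the key kill lemma
private lemma kill_lemma {G : SimpleGraph V} {kR θ1 θ2 θ3 : ℝ}
    (hS : ∀ a : ℝ, (∃ f : V → ℝ, f ≠ 0 ∧ G.adjMatrix ℝ *ᵥ f = a • f) →
      a = kR ∨ a = θ1 ∨ a = θ2 ∨ a = θ3) (v : V → ℝ) :
    ((G.adjMatrix ℝ - kR • 1) * ((G.adjMatrix ℝ - θ1 • 1) *
      ((G.adjMatrix ℝ - θ2 • 1) * (G.adjMatrix ℝ - θ3 • 1)))) *ᵥ v = 0 := by
  set A := G.adjMatrix ℝ with hA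
  have hherm := adj_isHermitian G
  apply mulVec_eq_zero_of_eigenbasis hherm
  intro j
  set u : V → ℝ := ⇑(hherm.eigenvectorBasis j) with hu
  set a : ℝ := hherm.eigenvalues j with ha
  have heig : A *ᵥ u = a • u := hherm.mulVec_eigenvectorBasis j
  have hne : u ≠ 0 := by
    have := hherm.eigenvectorBasis.orthonormal.ne_zero j
    intro hzero
    apply this
    ext i
    exact congrFun hzero i
  have haS : a = kR ∨ a = θ1 ∨ a = θ2 ∨ a = θ3 := hS a ⟨u, hne, heig⟩
  have step : ∀ (θ : ℝ) (c : ℝ) (B : Matrix V V ℝ), B *ᵥ u = c • u →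
      ((A - θ • 1) * B) *ᵥ u = ((a - θ) * c) • u := by
    intro θ c B hB
    rw [← Matrix.mulVec_mulVec, hB, Matrix.mulVec_smul, factor_mulVec A θ a u heig,
      smul_smul, mul_comm]
  have h3 : (A - θ3 • 1) *ᵥ u = (a - θ3) • u := factor_mulVec A θ3 a u heig
  have h23 := step θ2 (a - θ3) _ h3
  have h123 := step θ1 ((a - θ2) * (a - θ3)) _ h23
  have hk := step kR ((a - θ1) * ((a - θ2) * (a - θ3))) _ h123
  rw [hk]
  rcases haS with rfl | rfl | rfl | rfl <;> simp
end Spectral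


section Hoffman
variable [Fintype V]
set_option linter.unusedSectionVars false

private lemma M_expand (A : Matrix V V ℝ) (θ1 θ2 θ3 : ℝ) :
    (A - θ1 • 1) * ((A - θ2 • 1) * (A - θ3 • 1))
      = A * A * A - (θ1 + θ2 + θ3) • (A * A) + (θ1 * θ2 + θ1 * θ3 + θ2 * θ3) • A
        - (θ1 * θ2 * θ3) • 1 := by
  simp only [Matrix.mul_sub, Matrix.sub_mul, Matrix.smul_mul, Matrix.mul_smul,
    Matrix.mul_one, Matrix.one_mul, smul_smul, add_smul, smul_sub,
    Matrix.mul_assoc]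
  module

private lemma M_transpose (A : Matrix V V ℝ) (hA : Aᵀ = A) (θ1 θ2 θ3 : ℝ) :
    ((A - θ1 • 1) * ((A - θ2 • 1) * (A - θ3 • 1)))ᵀ
      = (A - θ1 • 1) * ((A - θ2 • 1) * (A - θ3 • 1)) := by
  rw [M_expand]
  simp only [Matrix.transpose_sub, Matrix.transpose_add, Matrix.transpose_smul,
    Matrix.transpose_mul, Matrix.transpose_one, hA]
  rw [Matrix.mul_assoc]

private lemma mulVec_single' (M : Matrix V V ℝ) (y : V) (i : V) :
    (M *ᵥ Pi.single y 1) i = M i y := by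
  rw [Matrix.mulVec, dotProduct]
  rw [Finset.sum_eq_single y]
  · simp
  · intro b _ hb
    simp [Pi.single_eq_of_ne hb]
  · simp
end Hoffman


section EdgeConst
variable [Fintype V]
set_option linter.unusedSectionVars false

private lemma edge_const [Nonempty V] {G : SimpleGraph V} {k l : ℕ} {θ1 θ2 θ3 : ℝ}
    (hreg : G.IsRegularOfDegree k) (hconn : G.Preconnected)
    (hS : ∀ a : ℝ, (∃ f : V → ℝ, f ≠ 0 ∧ G.adjMatrix ℝ *ᵥ f = a • f) →
      a = (k : ℝ) ∨ a = θ1 ∨ a = θ2 ∨ a = θ3)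
    (hBl : ∀ x y : V, G.Adj x y → (G.adjMatrix ℝ * G.adjMatrix ℝ) x y = l)
    {x y x' y' : V} (hxy : G.Adj x y) (hxy' : G.Adj x' y') :
    (G.adjMatrix ℝ * G.adjMatrix ℝ * G.adjMatrix ℝ) x y
      = (G.adjMatrix ℝ * G.adjMatrix ℝ * G.adjMatrix ℝ) x' y' := by
  set A := G.adjMatrix ℝ with hA
  set M := (A - θ1 • 1) * ((A - θ2 • 1) * (A - θ3 • 1)) with hM
  have hAM : ∀ v : V → ℝ, A *ᵥ (M *ᵥ v) = (k : ℝ) • (M *ᵥ v) := by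
    intro v
    have h0 := kill_lemma hS v
    rw [← Matrix.mulVec_mulVec, Matrix.sub_mulVec, Matrix.smul_mulVec,
      Matrix.one_mulVec, sub_eq_zero] at h0
    exact h0
  have hcol : ∀ (c : V) (a b : V), M a c = M b c := by
    intro c a b
    have := const_of_eig hreg hconn (M *ᵥ Pi.single c 1) (hAM _) a b
    rwa [mulVec_single', mulVec_single'] at this
  have hsym : ∀ a b : V, M a b = M b a := by
    intro a b
    have hAT : Aᵀ = A := G.transpose_adjMatrix
    have := congrFun (congrFun (M_transpose A hAT θ1 θ2 θ3) a) b
    rw [Matrix.transpose_apply] at this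
    exact this.symm
  have hall : M x y = M x' y' := by
    calc M x y = M x' y := hcol y x x'
    _ = M y x' := hsym x' y
    _ = M y' x' := hcol x' y y'
    _ = M x' y' := hsym y' x'
  have hentry : ∀ a b : V, G.Adj a b →
      M a b = (A * A * A) a b - (θ1 + θ2 + θ3) * l + (θ1 * θ2 + θ1 * θ3 + θ2 * θ3) := by
    intro a b hab
    rw [hM, M_expand]
    simp only [Matrix.sub_apply, Matrix.add_apply, Matrix.smul_apply, smul_eq_mul]
    rw [hBl a b hab, Matrix.one_apply_ne hab.ne]
    have : A a b = 1 := by simp [hA, SimpleGraph.adjMatrix_apply, hab]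
    rw [this]
    ring
  have h1 := hentry x y hxy
  have h2 := hentry x' y' hxy'
  rw [h1, h2] at hall
  linarith
end EdgeConst


section F3
variable [Fintype V] {G : SimpleGraph V} {k l : ℕ}
set_option linter.unusedSectionVars false

private lemma B_diag (hreg : G.IsRegularOfDegree k) (x : V) :
    (G.adjMatrix ℝ * G.adjMatrix ℝ) x x = (k : ℝ) := by
  rw [SimpleGraph.adjMatrix_mul_self_apply_self]
  exact_mod_cast congrArg Nat.cast (hreg x)

private lemma B_symm (G : SimpleGraph V) (x y : V) :
    (G.adjMatrix ℝ * G.adjMatrix ℝ) x y = (G.adjMatrix ℝ * G.adjMatrix ℝ) y x := by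
  rw [B_entry, B_entry, Finset.inter_comm]

-- F3: the 3-walk split for an edge
private lemma F3 (hreg : G.IsRegularOfDegree k)
    (hlam' : ∀ x y : V, G.Adj x y → (G.neighborFinset x ∩ G.neighborFinset y).card = l)
    (hBl : ∀ x y : V, G.Adj x y → (G.adjMatrix ℝ * G.adjMatrix ℝ) x y = l)
    {x y : V} (hxy : G.Adj x y) :
    (G.adjMatrix ℝ * G.adjMatrix ℝ * G.adjMatrix ℝ) x y
      = (k : ℝ) + (l : ℝ) * l
        + ∑ z ∈ (univ.filter (fun z => z ≠ x ∧ ¬ G.Adj x z)).filter (fun z => G.Adj y z),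
            (G.adjMatrix ℝ * G.adjMatrix ℝ) x z := by
  rw [SimpleGraph.mul_adjMatrix_apply]
  have hxmem : x ∈ G.neighborFinset y := by
    rw [SimpleGraph.mem_neighborFinset]; exact hxy.symm
  rw [← Finset.add_sum_erase _ _ hxmem, B_diag hreg]
  have hsplit := Finset.sum_filter_add_sum_filter_not ((G.neighborFinset y).erase x)
    (fun u => G.Adj x u) (fun u => (G.adjMatrix ℝ * G.adjMatrix ℝ) x u)
  have hpos : ((G.neighborFinset y).erase x).filter (fun u => G.Adj x u)
      = G.neighborFinset x ∩ G.neighborFinset y := by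
    ext u
    simp only [Finset.mem_filter, Finset.mem_erase, Finset.mem_inter,
      SimpleGraph.mem_neighborFinset]
    constructor
    · rintro ⟨⟨-, h2⟩, h3⟩; exact ⟨h3, h2⟩
    · rintro ⟨h1, h2⟩; exact ⟨⟨h1.ne', h2⟩, h1⟩
  have hneg : ((G.neighborFinset y).erase x).filter (fun u => ¬ G.Adj x u)
      = (univ.filter (fun z => z ≠ x ∧ ¬ G.Adj x z)).filter (fun z => G.Adj y z) := by
    ext u
    simp only [Finset.mem_filter, Finset.mem_erase, SimpleGraph.mem_neighborFinset, mem_univ,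
      true_and]
    tauto
  have hval : ∑ u ∈ G.neighborFinset x ∩ G.neighborFinset y,
      (G.adjMatrix ℝ * G.adjMatrix ℝ) x u = (l : ℝ) * l := by
    have hterm : ∀ u ∈ G.neighborFinset x ∩ G.neighborFinset y,
        (G.adjMatrix ℝ * G.adjMatrix ℝ) x u = (l : ℝ) := by
      intro u hu
      rw [Finset.mem_inter, SimpleGraph.mem_neighborFinset] at hu
      exact hBl x u hu.1
    rw [Finset.sum_congr rfl hterm, Finset.sum_const, hlam' x y hxy, nsmul_eq_mul]
  rw [← hsplit, hpos, hneg, hval] at *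
  linarith

-- the sum of B over non-neighbours
private lemma sumNA_B (hreg : G.IsRegularOfDegree k)
    (hBl : ∀ x y : V, G.Adj x y → (G.adjMatrix ℝ * G.adjMatrix ℝ) x y = l) (x : V) :
    ∑ z ∈ univ.filter (fun z => z ≠ x ∧ ¬ G.Adj x z), (G.adjMatrix ℝ * G.adjMatrix ℝ) x z
      = (k : ℝ) * k - k - k * l := by
  have h1 := sum_split G x (fun z => (G.adjMatrix ℝ * G.adjMatrix ℝ) x z)
  rw [B_rowsum G hreg x, B_diag hreg] at h1
  have h2 : ∑ z ∈ G.neighborFinset x, (G.adjMatrix ℝ * G.adjMatrix ℝ) x z = (k:ℝ) * l := by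
    have hterm : ∀ z ∈ G.neighborFinset x,
        (G.adjMatrix ℝ * G.adjMatrix ℝ) x z = (l : ℝ) := by
      intro z hz
      exact hBl x z (by rwa [SimpleGraph.mem_neighborFinset] at hz)
    rw [Finset.sum_congr rfl hterm, Finset.sum_const, nsmul_eq_mul,
      SimpleGraph.card_neighborFinset_eq_degree, hreg x]
  rw [h2] at h1
  linarith

-- the sum of B² over non-neighbours, given edge-constancy T of A³
private lemma sumNA_Bsq (hreg : G.IsRegularOfDegree k)
    (hBl : ∀ x y : V, G.Adj x y → (G.adjMatrix ℝ * G.adjMatrix ℝ) x y = l)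
    {T : ℝ}
    (hT : ∀ x y : V, G.Adj x y → (G.adjMatrix ℝ * G.adjMatrix ℝ * G.adjMatrix ℝ) x y = T)
    (x : V) :
    ∑ z ∈ univ.filter (fun z => z ≠ x ∧ ¬ G.Adj x z),
        ((G.adjMatrix ℝ * G.adjMatrix ℝ) x z)^2
      = (k : ℝ) * T - k * k - k * (l * l) := by
  set A := G.adjMatrix ℝ with hA
  have h4a : (A * A * A * A) x x = (k : ℝ) * T := by
    rw [SimpleGraph.mul_adjMatrix_apply]
    have hterm : ∀ u ∈ G.neighborFinset x, (A * A * A) x u = T := by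
      intro u hu
      exact hT x u (by rwa [SimpleGraph.mem_neighborFinset] at hu)
    rw [Finset.sum_congr rfl hterm, Finset.sum_const, nsmul_eq_mul,
      SimpleGraph.card_neighborFinset_eq_degree, hreg x]
  have h4b : (A * A * A * A) x x = ∑ z, ((A * A) x z)^2 := by
    have hassoc : A * A * A * A = (A * A) * (A * A) := by
      rw [Matrix.mul_assoc (A*A) A A]
    rw [hassoc, Matrix.mul_apply]
    apply Finset.sum_congr rfl
    intro z _
    rw [← B_symm G x z]
    ring
  have h5 := sum_split G x (fun z => ((A * A) x z)^2)
  rw [← h4b, h4a, B_diag hreg] at h5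
  have h6 : ∑ z ∈ G.neighborFinset x, ((A * A) x z)^2 = (k:ℝ) * (l * l) := by
    have hterm : ∀ z ∈ G.neighborFinset x, ((A * A) x z)^2 = (l : ℝ) * l := by
      intro z hz
      rw [hBl x z (by rwa [SimpleGraph.mem_neighborFinset] at hz)]
      ring
    rw [Finset.sum_congr rfl hterm, Finset.sum_const, nsmul_eq_mul,
      SimpleGraph.card_neighborFinset_eq_degree, hreg x]
  rw [h6] at h5
  have : ((k:ℝ))^2 = (k:ℝ) * k := sq (k:ℝ) ▸ by ring
  linarith [this]
end F3

end NeumaierProof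

/-- There is no Neumaier graph whose adjacency matrix has exactly four
distinct real eigenvalues. -/
theorem stmt19 [Fintype V] (G : SimpleGraph V) (hN : IsNeumaier G) :
    {θ : ℝ | IsAdjEigenvalue G θ}.ncard ≠ 4 := by
  intro h4
  set S := {θ : ℝ | IsAdjEigenvalue G θ} with hSdef
  -- V is nonempty
  cases isEmpty_or_nonempty V with
  | inl hemp =>
    have hSempty : S = ∅ := by
      ext θ
      simp only [Set.mem_setOf_eq, Set.mem_empty_iff_false, iff_false, hSdef]
      rintro ⟨f, hf, -⟩
      exact hf (funext fun x => (hemp.false x).elim)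
    rw [hSempty] at h4
    simp at h4
  | inr hne =>
    obtain ⟨⟨v, k, l, hcard, hreg, hlam⟩, htop, C, e, hCl, hepos, hE⟩ := hN
    set A := G.adjMatrix ℝ with hA
    have hlam' : ∀ x y : V, G.Adj x y →
        (G.neighborFinset x ∩ G.neighborFinset y).card = l := by
      intro x y h
      rw [← common_card]
      exact hlam x y h
    have hBl : ∀ x y : V, G.Adj x y → (A * A) x y = l := by
      intro x y h
      rw [B_entry, hlam' x y h]
    have hs2 : 2 ≤ C.card := clique_two_le hreg htop hepos hE
    have hconn : G.Preconnected := neumaier_preconnected hCl hepos hE hs2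
    have hk2 : k + 2 ≤ Fintype.card V := k_add_two_le hreg htop
    -- k is an eigenvalue
    have hkS : (k : ℝ) ∈ S := by
      refine ⟨fun _ => 1, ?_, ?_⟩
      · intro h0
        have := congrFun h0 (Classical.arbitrary V)
        simp at this
      · funext x
        rw [SimpleGraph.adjMatrix_mulVec_apply]
        simp [SimpleGraph.card_neighborFinset_eq_degree, hreg x]
    -- S is finite with 4 elements
    have hfin : S.Finite := by
      by_contra hinf
      rw [Set.Infinite.ncard hinf] at h4
      omega
    have hT4 : hfin.toFinset.card = 4 := by
      rw [← Set.ncard_eq_toFinset_card S hfin]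
      exact h4
    have hkT : (k : ℝ) ∈ hfin.toFinset := hfin.mem_toFinset.mpr hkS
    have hT3 : (hfin.toFinset.erase (k : ℝ)).card = 3 := by
      rw [Finset.card_erase_of_mem hkT, hT4]
    obtain ⟨θ1, θ2, θ3, h12, h13, h23, hTeq⟩ := Finset.card_eq_three.mp hT3
    have hSmem : ∀ a : ℝ, (∃ f : V → ℝ, f ≠ 0 ∧ A *ᵥ f = a • f) →
        a = (k : ℝ) ∨ a = θ1 ∨ a = θ2 ∨ a = θ3 := by
      intro a ha
      have haT : a ∈ hfin.toFinset := hfin.mem_toFinset.mpr ha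
      rcases eq_or_ne a (k : ℝ) with h | h
      · exact Or.inl h
      · have : a ∈ hfin.toFinset.erase (k : ℝ) := Finset.mem_erase.mpr ⟨h, haT⟩
        rw [hTeq] at this
        simp only [Finset.mem_insert, Finset.mem_singleton] at this
        tauto
    -- θi are eigenvalues distinct from k
    have hmemS : ∀ θ : ℝ, θ ∈ ({θ1, θ2, θ3} : Finset ℝ) → θ ∈ S ∧ θ ≠ (k : ℝ) := by
      intro θ hθ
      rw [← hTeq] at hθ
      have h1 := Finset.mem_of_mem_erase hθ
      have h2 := Finset.ne_of_mem_erase hθ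
      exact ⟨hfin.mem_toFinset.mp h1, h2⟩
    -- pick an edge inside the clique
    obtain ⟨x₀, hx₀, y₀, hy₀, hxy₀⟩ := Finset.one_lt_card.mp (by omega : 1 < C.card)
    have hedge₀ : G.Adj x₀ y₀ := hCl hx₀ hy₀ hxy₀
    -- T := constant value of A³ on edges
    set T : ℝ := (A * A * A) x₀ y₀ with hTdef
    have hT : ∀ x y : V, G.Adj x y → (A * A * A) x y = T := by
      intro x y h
      exact edge_const hreg hconn hSmem hBl h hedge₀
    -- explicit scalar identities
    have hI : ((C.card : ℝ) - 1) * (T - k - l * l)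
        = (e : ℝ) * ((k : ℝ) * k - k - k * l) := by
      have h1 := identity_I hCl hE hx₀
      have hinner : ∀ y ∈ C.erase x₀,
          ∑ z ∈ (univ.filter (fun z => z ≠ x₀ ∧ ¬ G.Adj x₀ z)).filter (fun z => G.Adj y z),
            ((G.neighborFinset x₀ ∩ G.neighborFinset z).card : ℝ) = T - k - l * l := by
        intro y hy
        rw [Finset.mem_erase] at hy
        have hadj : G.Adj x₀ y := hCl hx₀ hy.2 (Ne.symm hy.1)
        have h2 := F3 hreg hlam' hBl hadj
        rw [hT x₀ y hadj] at h2
        have h3 : ∑ z ∈ (univ.filter (fun z => z ≠ x₀ ∧ ¬ G.Adj x₀ z)).filter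
            (fun z => G.Adj y z), ((G.neighborFinset x₀ ∩ G.neighborFinset z).card : ℝ)
            = ∑ z ∈ (univ.filter (fun z => z ≠ x₀ ∧ ¬ G.Adj x₀ z)).filter
            (fun z => G.Adj y z), (A * A) x₀ z := by
          apply Finset.sum_congr rfl
          intro z _
          rw [B_entry]
        rw [h3]
        linarith
      rw [Finset.sum_congr rfl hinner, Finset.sum_const, nsmul_eq_mul,
        Finset.card_erase_of_mem hx₀] at h1
      have hsum2 : ∑ z ∈ univ.filter (fun z => z ≠ x₀ ∧ ¬ G.Adj x₀ z),
          ((G.neighborFinset x₀ ∩ G.neighborFinset z).card : ℝ)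
          = (k : ℝ) * k - k - k * l := by
        have h5 : ∑ z ∈ univ.filter (fun z => z ≠ x₀ ∧ ¬ G.Adj x₀ z),
            ((G.neighborFinset x₀ ∩ G.neighborFinset z).card : ℝ)
            = ∑ z ∈ univ.filter (fun z => z ≠ x₀ ∧ ¬ G.Adj x₀ z), (A * A) x₀ z := by
          apply Finset.sum_congr rfl
          intro z _
          rw [B_entry]
        rw [h5, sumNA_B hreg hBl x₀]
      rw [hsum2] at h1
      have hcast : ((C.card - 1 : ℕ) : ℝ) = (C.card : ℝ) - 1 := by
        rw [Nat.cast_sub (by omega : 1 ≤ C.card)]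
        simp
      rw [hcast] at h1
      exact h1
    -- identity: e * (n-1-k) = (s-1) * (k-1-l)
    have hEW : (e : ℝ) * ((Fintype.card V : ℝ) - 1 - k)
        = ((C.card : ℝ) - 1) * ((k : ℝ) - 1 - l) := by
      have h1 := edge_count hreg hCl hE
      have h2 := identity_V hreg hCl hlam' hE hs2 hepos hx₀
      linear_combination (-1 : ℝ) * h1 + h2
    have hsne : ((C.card : ℝ) - 1) ≠ 0 := by
      have : (2 : ℝ) ≤ (C.card : ℝ) := by exact_mod_cast hs2
      linarith
    have hene : (e : ℝ) ≠ 0 := by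
      have : (1 : ℝ) ≤ (e : ℝ) := by exact_mod_cast hepos
      linarith
    -- key equality W * k * D₀ = Σ₀²
    have hKey : ((Fintype.card V : ℝ) - 1 - k) * ((k : ℝ) * (T - k - l * l))
        = ((k : ℝ) * k - k - k * l) * ((k : ℝ) * k - k - k * l) := by
      have hmul : (((C.card : ℝ) - 1) * e)
            * (((Fintype.card V : ℝ) - 1 - k) * ((k : ℝ) * (T - k - l * l)))
          = (((C.card : ℝ) - 1) * e)
            * (((k : ℝ) * k - k - k * l) * ((k : ℝ) * k - k - k * l)) := by
        linear_combination ((e : ℝ) * ((Fintype.card V : ℝ) - 1 - k) * k) * hI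
          + ((e : ℝ) * ((k : ℝ) * k - k - k * l) * k) * hEW
      exact mul_left_cancel₀ (mul_ne_zero hsne hene) hmul
    have hWpos : (0 : ℝ) < (Fintype.card V : ℝ) - 1 - k := by
      have : ((k : ℝ)) + 2 ≤ (Fintype.card V : ℝ) := by exact_mod_cast hk2
      linarith
    have hWne : ((Fintype.card V : ℝ) - 1 - k) ≠ 0 := ne_of_gt hWpos
    set m₀ : ℝ := ((k : ℝ) * k - k - k * l) / ((Fintype.card V : ℝ) - 1 - k) with hm₀
    -- B is constant m₀ on non-adjacent distinct pairs
    have hBconst : ∀ x z : V, z ≠ x → ¬ G.Adj x z → (A * A) x z = m₀ := by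
      intro x z hzx hnadj
      have hq := sumNA_Bsq hreg hBl hT x
      have hb := sumNA_B hreg hBl x
      have hcardNA := NA_card G hreg x
      have hvar : ∑ w ∈ univ.filter (fun w => w ≠ x ∧ ¬ G.Adj x w),
          (((Fintype.card V : ℝ) - 1 - k) * (A * A) x w - ((k : ℝ) * k - k - k * l))^2
            = 0 := by
        have hexp : ∀ w ∈ univ.filter (fun w => w ≠ x ∧ ¬ G.Adj x w),
            (((Fintype.card V : ℝ) - 1 - k) * (A * A) x w - ((k : ℝ) * k - k - k * l))^2
              = ((Fintype.card V : ℝ) - 1 - k)^2 * ((A * A) x w)^2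
                - 2 * ((Fintype.card V : ℝ) - 1 - k) * ((k : ℝ) * k - k - k * l)
                    * ((A * A) x w)
                + ((k : ℝ) * k - k - k * l)^2 := by
          intro w _
          ring
        rw [Finset.sum_congr rfl hexp, Finset.sum_add_distrib, Finset.sum_sub_distrib,
          ← Finset.mul_sum, ← Finset.mul_sum, Finset.sum_const, hq, hb, nsmul_eq_mul,
          hcardNA]
        linear_combination ((Fintype.card V : ℝ) - 1 - k) * hKey
      have hmem : z ∈ univ.filter (fun w => w ≠ x ∧ ¬ G.Adj x w) := by
        rw [Finset.mem_filter]
        exact ⟨mem_univ z, hzx, hnadj⟩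
      have hzero := (Finset.sum_eq_zero_iff_of_nonneg
        (fun w _ => sq_nonneg _)).mp hvar z hmem
      have h2 : ((Fintype.card V : ℝ) - 1 - k) * (A * A) x z
          - ((k : ℝ) * k - k - k * l) = 0 := by
        exact pow_eq_zero_iff (by norm_num) |>.mp hzero
      rw [hm₀]
      field_simp
      linarith
    -- every eigenvalue ≠ k satisfies the quadratic
    have hquad : ∀ θ : ℝ, θ ∈ S → θ ≠ (k : ℝ) →
        θ^2 = ((l : ℝ) - m₀) * θ + ((k : ℝ) - m₀) := by
      intro θ hθS hθk
      obtain ⟨f, hf0, hfe⟩ := hθS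
      -- sum of f is zero
      have hc1 : ∑ x, (A *ᵥ f) x = θ * ∑ x, f x := by
        rw [hfe, Finset.mul_sum]
        apply Finset.sum_congr rfl
        intro x _
        simp
      have hc2 : ∑ x, (A *ᵥ f) x = (k : ℝ) * ∑ x, f x := by
        simp_rw [Matrix.mulVec, dotProduct]
        rw [Finset.sum_comm, Finset.mul_sum]
        apply Finset.sum_congr rfl
        intro y _
        rw [← Finset.sum_mul, A_colsum G hreg y]
      have hsum0 : ∑ x, f x = 0 := by
        have h3 : (θ - (k : ℝ)) * ∑ x, f x = 0 := by linear_combination hc2 - hc1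
        rcases mul_eq_zero.mp h3 with h | h
        · exact absurd (by linarith : θ = (k : ℝ)) hθk
        · exact h
      obtain ⟨x, hfx⟩ := Function.ne_iff.mp hf0
      simp only [Pi.zero_apply] at hfx
      have hNsum : ∑ z ∈ G.neighborFinset x, f z = θ * f x := by
        have := congrFun hfe x
        rw [SimpleGraph.adjMatrix_mulVec_apply] at this
        simpa using this
      have hBf : ((A * A) *ᵥ f) x = θ^2 * f x := by
        have h1 : (A * A) *ᵥ f = θ • (θ • f) := by
          rw [← Matrix.mulVec_mulVec, hfe, Matrix.mulVec_smul, hfe]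
        rw [h1]
        simp only [Pi.smul_apply, smul_eq_mul]
        ring
      have hBfx : ((A * A) *ᵥ f) x = ∑ z, (A * A) x z * f z := rfl
      have hsplit := sum_split G x (fun z => (A * A) x z * f z)
      have hfsplit := sum_split G x f
      rw [hsum0] at hfsplit
      have hNval : ∑ z ∈ G.neighborFinset x, (A * A) x z * f z
          = (l : ℝ) * (θ * f x) := by
        have hterm : ∀ z ∈ G.neighborFinset x, (A * A) x z * f z = (l : ℝ) * f z := by
          intro z hz
          rw [hBl x z (by rwa [SimpleGraph.mem_neighborFinset] at hz)]
        rw [Finset.sum_congr rfl hterm, ← Finset.mul_sum, hNsum]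
      have hNAval : ∑ z ∈ univ.filter (fun z => z ≠ x ∧ ¬ G.Adj x z), (A * A) x z * f z
          = m₀ * (- f x - θ * f x) := by
        have hterm : ∀ z ∈ univ.filter (fun z => z ≠ x ∧ ¬ G.Adj x z),
            (A * A) x z * f z = m₀ * f z := by
          intro z hz
          rw [Finset.mem_filter] at hz
          rw [hBconst x z hz.2.1 hz.2.2]
        rw [Finset.sum_congr rfl hterm, ← Finset.mul_sum]
        have : ∑ z ∈ univ.filter (fun z => z ≠ x ∧ ¬ G.Adj x z), f z
            = - f x - θ * f x := by
          rw [hNsum] at hfsplit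
          linarith
        rw [this]
      have hdiag : (A * A) x x * f x = (k : ℝ) * f x := by
        rw [B_diag hreg]
      have h9 : ∑ z : V, (A * A) x z * f z = θ^2 * f x := by
        rw [← hBfx, hBf]
      rw [hNval, hNAval, hdiag, h9] at hsplit
      have hfinal : θ^2 * f x = (((l : ℝ) - m₀) * θ + ((k : ℝ) - m₀)) * f x := by
        linear_combination hsplit
      exact mul_right_cancel₀ hfx hfinal
    -- three distinct roots of one quadratic: contradiction
    have hq1 := hquad θ1 (hmemS θ1 (by simp)).1 (hmemS θ1 (by simp)).2
    have hq2 := hquad θ2 (hmemS θ2 (by simp)).1 (hmemS θ2 (by simp)).2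
    have hq3 := hquad θ3 (hmemS θ3 (by simp)).1 (hmemS θ3 (by simp)).2
    have e12 : (θ1 - θ2) * ((θ1 + θ2) - ((l : ℝ) - m₀)) = 0 := by
      linear_combination hq1 - hq2
    have e13 : (θ1 - θ3) * ((θ1 + θ3) - ((l : ℝ) - m₀)) = 0 := by
      linear_combination hq1 - hq3
    have h12' : θ1 + θ2 = (l : ℝ) - m₀ := by
      rcases mul_eq_zero.mp e12 with h | h
      · exact absurd (by linarith : θ1 = θ2) h12
      · linarith
    have h13' : θ1 + θ3 = (l : ℝ) - m₀ := by
      rcases mul_eq_zero.mp e13 with h | h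
      · exact absurd (by linarith : θ1 = θ3) h13
      · linarith
    exact h23 (by linarith : θ2 = θ3)
end
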